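/- arXiv:2410.21224 — 4 statements merged into one kernel-verified Lean document; each statement's English description precedes it below -/
import Mathlib

section
/- The Artin-Hasse exponential E_p(t) = exp(Σ_{i≥0} t^{p^i}/p^i) has all coefficients in ℤ_(p), i.e., E_p(t) ∈ ℤ_(p)⟦t⟧. -/
open PowerSeries Classical
/-- Formal exponential `exp f = Σ_n f^n / n!` of a power series `f` (intended for `f` with
zero constant term, in which case each coefficient is the indicated finite sum). -/
noncomputable def pexp {K : Type} [Field K] [CharZero K] (f : PowerSeries K) :
    PowerSeries K :=
  PowerSeries.mk fun d =>
    ∑ n ∈ Finset.range (d + 1), PowerSeries.coeff (R := K) d (f ^ n) / (Nat.factorial n : K)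

/-- The series `Σ_{i ≥ 0} t^{p^i}/p^i`: its coefficient at `t^n` is `1/n` if `n` is a
positive power of `p` (including `p^0 = 1`) and `0` otherwise. -/
noncomputable def AHlog (p : ℕ) (K : Type) [Field K] [CharZero K] : PowerSeries K :=
  PowerSeries.mk fun n => if 0 < n ∧ ∃ i : ℕ, n = p ^ i then (n : K)⁻¹ else 0

/-- The Artin–Hasse exponential `E_p(t) = exp (Σ_{i≥0} t^{p^i}/p^i)`. -/
noncomputable def AH (p : ℕ) (K : Type) [Field K] [CharZero K] : PowerSeries K :=
  pexp (AHlog p K)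

open Finset
namespace AHwork
variable {K : Type} [Field K] [CharZero K]

lemma coeff_pow_eq_zero {f : PowerSeries K} (hf : constantCoeff (R := K) f = 0) {d n : ℕ}
    (h : d < n) : coeff (R := K) d (f ^ n) = 0 := by
  have : (X : PowerSeries K) ^ n ∣ f ^ n := pow_dvd_pow_of_dvd (X_dvd_iff.mpr hf) n
  exact (X_pow_dvd_iff.mp this) d h

lemma coeff_mul_pow_eq_zero {f g : PowerSeries K} (hf : constantCoeff (R := K) f = 0)
    (hg : constantCoeff (R := K) g = 0) {d k j : ℕ} (h : d < k + j) :
    coeff (R := K) d (f ^ k * g ^ j) = 0 := by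
  have : (X : PowerSeries K) ^ (k + j) ∣ f ^ k * g ^ j := by
    rw [pow_add]
    exact mul_dvd_mul (pow_dvd_pow_of_dvd (X_dvd_iff.mpr hf) k)
      (pow_dvd_pow_of_dvd (X_dvd_iff.mpr hg) j)
  exact (X_pow_dvd_iff.mp this) d h

lemma coeff_pexp (f : PowerSeries K) (d : ℕ) :
    coeff (R := K) d (pexp f) = ∑ n ∈ range (d + 1), coeff (R := K) d (f ^ n) / (Nat.factorial n : K) :=
  coeff_mk _ _

lemma coeff_pexp' {f : PowerSeries K} (hf : constantCoeff (R := K) f = 0) {d N : ℕ} (h : d < N) :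
    coeff (R := K) d (pexp f) = ∑ n ∈ range N, coeff (R := K) d (f ^ n) / (Nat.factorial n : K) := by
  rw [coeff_pexp]
  apply Finset.sum_subset
  · intro x hx; simp only [mem_range] at *; omega
  · intro x _ hx
    simp only [mem_range, not_lt] at hx
    rw [coeff_pow_eq_zero hf (by omega), zero_div]

lemma constantCoeff_pexp (f : PowerSeries K) : constantCoeff (R := K) (pexp f) = 1 := by
  have : coeff (R := K) 0 (pexp f) = 1 := by rw [coeff_pexp]; simp
  simpa using this

lemma sum_tri {M : Type} [AddCommMonoid M] (d : ℕ) (t : ℕ → ℕ → M)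
    (h : ∀ k j, d < k + j → t k j = 0) :
    ∑ n ∈ range (d + 1), ∑ k ∈ range (n + 1), t k (n - k)
      = ∑ k ∈ range (d + 1), ∑ j ∈ range (d + 1), t k j := by
  rw [Finset.sum_sigma', ← Finset.sum_product']
  symm
  rw [← Finset.sum_filter_add_sum_filter_not (range (d+1) ×ˢ range (d+1))
    (fun x => x.1 + x.2 ≤ d)]
  have h2 : ∑ x ∈ filter (fun x => ¬(x.1 + x.2 ≤ d)) (range (d+1) ×ˢ range (d+1)),
      t x.1 x.2 = 0 := by
    apply Finset.sum_eq_zero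
    intro x hx
    simp only [mem_filter, not_le] at hx
    exact h x.1 x.2 hx.2
  rw [h2, add_zero]
  refine Finset.sum_nbij' (fun x => ⟨x.1 + x.2, x.1⟩)
    (fun i => (i.2, i.1 - i.2)) ?_ ?_ ?_ ?_ ?_
  · intro a ha
    simp only [mem_filter, mem_product, mem_range, Finset.mem_sigma] at *
    omega
  · intro a ha
    simp only [mem_filter, mem_product, mem_range, Finset.mem_sigma] at *
    omega
  · intro a ha; simp
  · intro a ha
    obtain ⟨x, y⟩ := a
    simp only [Finset.mem_sigma, mem_range] at ha
    show (⟨y + (x - y), y⟩ : (_ : ℕ) × ℕ) = ⟨x, y⟩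
    rw [show y + (x - y) = x by omega]
  · intro a ha; simp

theorem pexp_mul {f g : PowerSeries K} (hf : constantCoeff (R := K) f = 0)
    (hg : constantCoeff (R := K) g = 0) : pexp (f + g) = pexp f * pexp g := by
  have hfac : ∀ m : ℕ, (Nat.factorial m : K) ≠ 0 := fun m =>
    Nat.cast_ne_zero.mpr (Nat.factorial_ne_zero m)
  ext d
  have hr : ∀ x ∈ antidiagonal d, coeff (R := K) x.1 (pexp f) * coeff (R := K) x.2 (pexp g)
      = ∑ k ∈ range (d+1), ∑ j ∈ range (d+1),
          coeff (R := K) x.1 (f ^ k) * coeff (R := K) x.2 (g ^ j)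
            / ((Nat.factorial k : K) * Nat.factorial j) := by
    intro x hx
    rw [Finset.HasAntidiagonal.mem_antidiagonal] at hx
    rw [coeff_pexp' hf (show x.1 < d + 1 by omega), coeff_pexp' hg (show x.2 < d + 1 by omega),
      Finset.sum_mul_sum]
    refine Finset.sum_congr rfl fun k _ => Finset.sum_congr rfl fun j _ => ?_
    field_simp
  have hRHS : coeff (R := K) d (pexp f * pexp g) = ∑ k ∈ range (d+1), ∑ j ∈ range (d+1),
      coeff (R := K) d (f ^ k * g ^ j) / ((Nat.factorial k : K) * Nat.factorial j) := by
    rw [coeff_mul, Finset.sum_congr rfl hr, Finset.sum_comm]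
    refine Finset.sum_congr rfl fun k _ => ?_
    rw [Finset.sum_comm]
    refine Finset.sum_congr rfl fun j _ => ?_
    rw [← Finset.sum_div, ← coeff_mul]
  have hstep : ∀ n ∈ range (d+1), coeff (R := K) d ((f + g) ^ n) / (Nat.factorial n : K)
      = ∑ k ∈ range (n+1), coeff (R := K) d (f ^ k * g ^ (n - k))
          / ((Nat.factorial k : K) * Nat.factorial (n - k)) := by
    intro n _
    rw [add_pow, map_sum, Finset.sum_div]
    refine Finset.sum_congr rfl fun k hk => ?_
    rw [mem_range] at hk
    have : ((n.choose k : ℕ) : PowerSeries K) = C (R := K) ((n.choose k : ℕ) : K) := by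
      rw [map_natCast]
    rw [this, coeff_mul_C, Nat.cast_choose K (by omega : k ≤ n)]
    rw [div_eq_iff (hfac n)]
    field_simp
    try ring
  rw [coeff_pexp, Finset.sum_congr rfl hstep, hRHS]
  exact sum_tri d
    (fun k j => coeff (R := K) d (f ^ k * g ^ j) / ((Nat.factorial k : K) * Nat.factorial j))
    (fun k j hkj => by simp only [coeff_mul_pow_eq_zero hf hg hkj, zero_div])

lemma pexp_zero : pexp (0 : PowerSeries K) = 1 := by
  ext d
  rw [coeff_pexp]
  rcases Nat.eq_zero_or_pos d with rfl | hd
  · simp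
  · rw [Finset.sum_eq_zero, coeff_one, if_neg (by omega)]
    intro n hn
    rcases Nat.eq_zero_or_pos n with rfl | hn'
    · simp only [pow_zero, coeff_one, Nat.factorial_zero, Nat.cast_one, div_one]
      rw [if_neg (by omega)]
    · rw [zero_pow (by omega), map_zero, zero_div]

lemma pexp_pow {f : PowerSeries K} (hf : constantCoeff (R := K) f = 0) (m : ℕ) :
    pexp f ^ m = pexp (m • f) := by
  induction m with
  | zero => simp [pexp_zero]
  | succ k ih =>
    rw [pow_succ, ih, ← pexp_mul (by simp [hf]) hf, succ_nsmul]


noncomputable def Phi (p : ℕ) (f : PowerSeries K) : PowerSeries K :=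
  PowerSeries.mk fun n => if p ∣ n then coeff (R := K) (n / p) f else 0

lemma coeff_Phi (p : ℕ) (f : PowerSeries K) (n : ℕ) :
    coeff (R := K) n (Phi p f) = if p ∣ n then coeff (R := K) (n / p) f else 0 := coeff_mk _ _

variable {p : ℕ} (hp : 2 ≤ p)

lemma Phi_add (f g : PowerSeries K) : Phi p (f + g) = Phi p f + Phi p g := by
  ext n
  simp only [coeff_Phi, map_add]
  split <;> simp

lemma Phi_sub (f g : PowerSeries K) : Phi p (f - g) = Phi p f - Phi p g := by
  ext n
  simp only [coeff_Phi, map_sub]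
  split <;> simp

include hp

lemma Phi_one : Phi p (1 : PowerSeries K) = 1 := by
  ext n
  rw [coeff_Phi]
  rcases Nat.eq_zero_or_pos n with rfl | hn
  · simp
  · by_cases h : p ∣ n
    · have h1 := Nat.le_of_dvd hn h
      have h2 := Nat.div_pos h1 (by omega : 0 < p)
      rw [if_pos h, coeff_one, coeff_one, if_neg (by omega : ¬ n / p = 0),
        if_neg (by omega : ¬ n = 0)]
    · rw [if_neg h, coeff_one, if_neg (by omega : ¬ n = 0)]

lemma Phi_mul (f g : PowerSeries K) : Phi p (f * g) = Phi p f * Phi p g := by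
  ext n
  rw [coeff_mul, coeff_Phi]
  by_cases hn : p ∣ n
  · obtain ⟨m, rfl⟩ := hn
    rw [if_pos ⟨m, rfl⟩, Nat.mul_div_cancel_left m (by omega), coeff_mul]
    rw [← Finset.sum_filter_add_sum_filter_not (antidiagonal (p * m)) (fun x => p ∣ x.1)]
    have h2 : ∑ x ∈ filter (fun x => ¬ p ∣ x.1) (antidiagonal (p * m)),
        coeff (R := K) x.1 (Phi p f) * coeff (R := K) x.2 (Phi p g) = 0 := by
      apply Finset.sum_eq_zero
      intro x hx
      simp only [mem_filter] at hx
      rw [coeff_Phi, if_neg hx.2, zero_mul]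
    rw [h2, add_zero]
    refine Finset.sum_nbij' (fun y => (p * y.1, p * y.2)) (fun x => (x.1 / p, x.2 / p))
      ?_ ?_ ?_ ?_ ?_
    · intro a ha
      simp only [Finset.HasAntidiagonal.mem_antidiagonal] at ha
      simp only [mem_filter, Finset.HasAntidiagonal.mem_antidiagonal]
      exact ⟨by rw [← Nat.mul_add, ha], dvd_mul_right p a.1⟩
    · intro a ha
      simp only [mem_filter, Finset.HasAntidiagonal.mem_antidiagonal] at ha
      have h2 : p ∣ a.2 := (Nat.dvd_add_right ha.2).mp (by rw [ha.1]; exact dvd_mul_right p m)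
      obtain ⟨k, hk⟩ := ha.2
      obtain ⟨l, hl⟩ := h2
      simp only [Finset.HasAntidiagonal.mem_antidiagonal]
      rw [hk, hl, Nat.mul_div_cancel_left _ (by omega : 0 < p),
        Nat.mul_div_cancel_left _ (by omega : 0 < p)]
      have heq : p * (k + l) = p * m := by rw [Nat.mul_add, ← hk, ← hl, ha.1]
      exact Nat.eq_of_mul_eq_mul_left (by omega) heq
    · intro a ha
      obtain ⟨x, y⟩ := a
      simp only [Nat.mul_div_cancel_left _ (by omega : 0 < p)]
    · intro a ha
      simp only [mem_filter, Finset.HasAntidiagonal.mem_antidiagonal] at ha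
      have h2 : p ∣ a.2 := (Nat.dvd_add_right ha.2).mp (by rw [ha.1]; exact dvd_mul_right p m)
      obtain ⟨k, hk⟩ := ha.2
      obtain ⟨l, hl⟩ := h2
      obtain ⟨x, y⟩ := a
      simp only at hk hl
      rw [hk, hl]
      simp only [Nat.mul_div_cancel_left _ (by omega : 0 < p)]
    · intro a ha
      rw [coeff_Phi, coeff_Phi, if_pos (dvd_mul_right p a.1), if_pos (dvd_mul_right p a.2),
        Nat.mul_div_cancel_left _ (by omega : 0 < p),
        Nat.mul_div_cancel_left _ (by omega : 0 < p)]
  · rw [if_neg hn]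
    symm
    apply Finset.sum_eq_zero
    intro x hx
    rw [Finset.HasAntidiagonal.mem_antidiagonal] at hx
    by_cases h1 : p ∣ x.1
    · have h2 : ¬ p ∣ x.2 := fun h2 => hn (hx ▸ Nat.dvd_add h1 h2)
      rw [coeff_Phi p g x.2, if_neg h2, mul_zero]
    · rw [coeff_Phi p f x.1, if_neg h1, zero_mul]

lemma Phi_pow (f : PowerSeries K) (m : ℕ) : Phi p (f ^ m) = Phi p f ^ m := by
  induction m with
  | zero => simpa using Phi_one hp
  | succ k ih => rw [pow_succ, Phi_mul hp, ih, pow_succ]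

lemma Phi_monomial (m : ℕ) (c : K) :
    Phi p (monomial (R := K) m c) = monomial (R := K) (p * m) c := by
  ext n
  have hR : coeff (R := K) n (monomial (R := K) (p * m) c) = if n = p * m then c else 0 :=
    coeff_monomial _ _ _
  rw [coeff_Phi, hR]
  by_cases h : p ∣ n
  · obtain ⟨k, rfl⟩ := h
    have hL : coeff (R := K) (p * k / p) (monomial (R := K) m c) = if p * k / p = m then c else 0 :=
      coeff_monomial _ _ _
    rw [if_pos (dvd_mul_right p k), hL, Nat.mul_div_cancel_left _ (by omega : 0 < p)]
    by_cases hk : k = m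
    · subst hk; rw [if_pos rfl, if_pos rfl]
    · rw [if_neg hk, if_neg (fun hh => hk (Nat.eq_of_mul_eq_mul_left (by omega) hh))]
  · rw [if_neg h, if_neg (fun hh : n = p * m => h (hh ▸ dvd_mul_right p m))]

lemma constantCoeff_Phi (f : PowerSeries K) :
    constantCoeff (R := K) (Phi p f) = constantCoeff (R := K) f := by
  have : coeff (R := K) 0 (Phi p f) = coeff (R := K) 0 f := by
    rw [coeff_Phi, if_pos (dvd_zero p), Nat.zero_div]
  simpa using this


lemma Phi_pexp {f : PowerSeries K} (hf : constantCoeff (R := K) f = 0) :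
    Phi p (pexp f) = pexp (Phi p f) := by
  have hPf : constantCoeff (R := K) (Phi p f) = 0 := by rw [constantCoeff_Phi hp, hf]
  ext d
  have hRHS : coeff (R := K) d (pexp (Phi p f))
      = ∑ n ∈ range (d + 1), coeff (R := K) d ((Phi p f) ^ n) / (Nat.factorial n : K) :=
    coeff_pexp _ _
  rw [coeff_Phi, hRHS]
  have hterm : ∀ n, coeff (R := K) d ((Phi p f) ^ n) = if p ∣ d then coeff (R := K) (d / p) (f ^ n) else 0 := by
    intro n
    rw [← Phi_pow hp, coeff_Phi]
  by_cases h : p ∣ d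
  · rw [if_pos h]
    have hdp : d / p < d + 1 := by
      have := Nat.div_le_self d p; omega
    rw [coeff_pexp' hf hdp]
    refine Finset.sum_congr rfl fun n _ => ?_
    rw [hterm n, if_pos h]
  · rw [if_neg h]
    symm
    apply Finset.sum_eq_zero
    intro n _
    rw [hterm n, if_neg h, zero_div]

omit hp

lemma coeff_AHlog (n : ℕ) :
    coeff (R := K) n (AHlog p K) = if 0 < n ∧ ∃ i : ℕ, n = p ^ i then (n : K)⁻¹ else 0 :=
  coeff_mk _ _

lemma constantCoeff_AHlog : constantCoeff (R := K) (AHlog p K) = 0 := by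
  have h : coeff (R := K) 0 (AHlog p K) = 0 := by
    rw [coeff_AHlog, if_neg (by simp)]
  simpa using h

include hp

lemma Phi_AHlog : Phi p (AHlog p K) = (p : K) • (AHlog p K) - (p : K) • (X : PowerSeries K) := by
  have hp0 : ((p : K)) ≠ 0 := Nat.cast_ne_zero.mpr (by omega)
  ext n
  have hL : coeff (R := K) (n / p) (AHlog p K)
      = if 0 < n / p ∧ ∃ i : ℕ, n / p = p ^ i then ((n / p : ℕ) : K)⁻¹ else 0 := coeff_AHlog _
  rw [map_sub, map_smul, map_smul, coeff_Phi, hL, coeff_AHlog, coeff_X, smul_eq_mul, smul_eq_mul]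
  rcases Nat.eq_zero_or_pos n with rfl | hn
  · simp
  rcases eq_or_ne n 1 with rfl | hn1
  · rw [if_neg (by intro h; exact absurd (Nat.le_of_dvd one_pos h) (by omega)),
      if_pos ⟨one_pos, 0, (pow_zero p).symm⟩, if_pos rfl]
    simp
  · rw [if_neg hn1, mul_zero, sub_zero]
    by_cases hex : ∃ i : ℕ, n = p ^ i
    · obtain ⟨i, rfl⟩ := hex
      have hi : i ≠ 0 := by rintro rfl; simp at hn1
      obtain ⟨j, rfl⟩ : ∃ j, i = j + 1 := ⟨i - 1, by omega⟩
      have hdvd : p ∣ p ^ (j + 1) := dvd_pow_self p (by omega)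
      have hdiv : p ^ (j + 1) / p = p ^ j := by
        rw [pow_succ, Nat.mul_div_cancel _ (by omega : 0 < p)]
      rw [if_pos hdvd, hdiv, if_pos ⟨pow_pos (by omega) _, ⟨j, rfl⟩⟩,
        if_pos ⟨hn, j + 1, rfl⟩]
      push_cast
      rw [pow_succ', mul_inv, ← mul_assoc, mul_inv_cancel₀ hp0, one_mul]
    · rw [if_neg (fun h : 0 < n ∧ ∃ i : ℕ, n = p ^ i => hex h.2), mul_zero]
      by_cases hdp : p ∣ n
      · rw [if_pos hdp, if_neg]
        rintro ⟨hpos, i, hi⟩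
        exact hex ⟨i + 1, by rw [pow_succ', ← hi, Nat.mul_div_cancel' hdp]⟩
      · rw [if_neg hdp]

omit hp in
lemma coeff_pexp_smul_X (c : K) (m : ℕ) :
    coeff (R := K) m (pexp (c • (X : PowerSeries K))) = c ^ m / (Nat.factorial m : K) := by
  rw [coeff_pexp]
  have hterm : ∀ n, coeff (R := K) m ((c • (X : PowerSeries K)) ^ n)
      = c ^ n * (if m = n then 1 else 0) := by
    intro n
    rw [smul_pow, map_smul, smul_eq_mul, coeff_X_pow]
  rw [Finset.sum_eq_single m]
  · rw [hterm, if_pos rfl, mul_one]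
  · intro n _ hn
    rw [hterm, if_neg (fun h => hn h.symm), mul_zero, zero_div]
  · intro h
    exact absurd (Finset.self_mem_range_succ m) h

omit hp in
lemma constantCoeff_smul_X (c : K) : constantCoeff (R := K) (c • (X : PowerSeries K)) = 0 := by
  have h : coeff (R := K) 0 (c • (X : PowerSeries K)) = 0 := by
    rw [map_smul, smul_eq_mul]
    simp
  simpa using h

noncomputable def AHG (p : ℕ) (K : Type) [Field K] [CharZero K] : PowerSeries K :=
  pexp ((-(p : K)) • (X : PowerSeries K))

lemma AH_functional_eq : Phi p (AH p K) = AH p K ^ p * AHG p K := by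
  have hL0 : constantCoeff (R := K) (AHlog p K) = 0 := constantCoeff_AHlog
  have hPL0 : constantCoeff (R := K) (Phi p (AHlog p K)) = 0 := by
    rw [constantCoeff_Phi hp, hL0]
  have h1 : AH p K ^ p = pexp ((p : K) • AHlog p K) := by
    rw [AH, pexp_pow hL0 p, ← Nat.cast_smul_eq_nsmul K p (AHlog p K)]
  have h2 : (p : K) • AHlog p K = Phi p (AHlog p K) + (p : K) • (X : PowerSeries K) := by
    rw [Phi_AHlog hp, sub_add_cancel]
  symm
  rw [h1, h2, pexp_mul hPL0 (constantCoeff_smul_X _), AH, Phi_pexp hp hL0, AHG, mul_assoc,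
    ← pexp_mul (constantCoeff_smul_X _) (constantCoeff_smul_X _), ← add_smul, add_neg_cancel,
    zero_smul, pexp_zero, mul_one]

omit hp

lemma C_mul_X_pow_eq (a : K) (m : ℕ) : C (R := K) a * X ^ m = monomial (R := K) m a := by
  ext n
  rw [coeff_C_mul_X_pow, coeff_monomial]

section Padic

variable (q : ℕ) [hq : Fact q.Prime]

lemma norm_sum_le {ι : Type} {s : Finset ι} {f : ι → ℚ_[q]} {C : ℝ} (h0 : 0 ≤ C)
    (h : ∀ i ∈ s, ‖f i‖ ≤ C) : ‖∑ i ∈ s, f i‖ ≤ C :=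
  IsUltrametricDist.norm_sum_le_of_forall_le_of_nonneg h0 h

/-- integrality predicate -/
def Intl (f : PowerSeries ℚ_[q]) : Prop := ∀ k, ‖coeff (R := ℚ_[q]) k f‖ ≤ 1

variable {q}

lemma Intl.mul {f g : PowerSeries ℚ_[q]} (hf : Intl q f) (hg : Intl q g) : Intl q (f * g) := by
  intro k
  rw [coeff_mul]
  apply norm_sum_le q zero_le_one
  intro x _
  rw [norm_mul]
  calc ‖coeff (R := ℚ_[q]) x.1 f‖ * ‖coeff (R := ℚ_[q]) x.2 g‖ ≤ 1 * 1 :=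
        mul_le_mul (hf x.1) (hg x.2) (norm_nonneg _) zero_le_one
    _ = 1 := mul_one 1

lemma Intl.one : Intl q (1 : PowerSeries ℚ_[q]) := by
  intro k
  rw [coeff_one]
  split <;> simp

lemma Intl.pow {f : PowerSeries ℚ_[q]} (hf : Intl q f) (m : ℕ) : Intl q (f ^ m) := by
  induction m with
  | zero => simpa using Intl.one
  | succ k ih => rw [pow_succ]; exact ih.mul hf

lemma Intl.C_of {a : ℚ_[q]} (ha : ‖a‖ ≤ 1) : Intl q (C (R := ℚ_[q]) a) := by
  intro k
  rw [coeff_C]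
  split
  · exact ha
  · simp

lemma Intl.monomial_of {a : ℚ_[q]} (ha : ‖a‖ ≤ 1) (m : ℕ) :
    Intl q (C (R := ℚ_[q]) a * X ^ m) := by
  intro k
  rw [coeff_C_mul_X_pow]
  split
  · exact ha
  · simp

lemma Intl.sum {ι : Type} {s : Finset ι} {f : ι → PowerSeries ℚ_[q]}
    (h : ∀ i ∈ s, Intl q (f i)) : Intl q (∑ i ∈ s, f i) := by
  intro k
  rw [map_sum]
  exact norm_sum_le q zero_le_one fun i hi => h i hi k

lemma Intl.natCast (m : ℕ) : Intl q ((m : PowerSeries ℚ_[q])) := by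
  have h : ((m : PowerSeries ℚ_[q])) = C (R := ℚ_[q]) ((m : ℚ_[q])) := by
    rw [map_natCast]
  rw [h]
  apply Intl.C_of
  have h2 : ((m : ℚ_[q])) = ((m : ℤ) : ℚ_[q]) := by push_cast; rfl
  rw [h2]
  exact Padic.norm_int_le_one _

lemma fermat_aux (a : ℚ_[q]) (ha : ‖a‖ ≤ 1) : ‖a ^ q - a‖ ≤ (q : ℝ)⁻¹ := by
  set b : ℤ_[q] := ⟨a, ha⟩ with hb
  have hcoe : ((b ^ q - b : ℤ_[q]) : ℚ_[q]) = a ^ q - a := by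
    push_cast [hb]
    rfl
  have h1 : ‖b ^ q - b‖ ≤ (q : ℝ) ^ (-(1 : ℕ) : ℤ) := by
    rw [PadicInt.norm_le_pow_iff_mem_span_pow, pow_one, ← PadicInt.maximalIdeal_eq_span_p,
      ← PadicInt.ker_toZMod, RingHom.mem_ker, map_sub, map_pow, ZMod.pow_card, sub_self]
  have h2 : ‖a ^ q - a‖ = ‖b ^ q - b‖ := by
    rw [PadicInt.norm_def, hcoe]
  rw [h2]
  calc ‖b ^ q - b‖ ≤ (q : ℝ) ^ (-(1 : ℕ) : ℤ) := h1
    _ = (q : ℝ)⁻¹ := by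
        rw [Nat.cast_one, zpow_neg, zpow_one]

lemma frob (s : Finset ℕ) (c : ℕ → ℚ_[q]) (hc : ∀ i ∈ s, ‖c i‖ ≤ 1) (k : ℕ) :
    ‖coeff (R := ℚ_[q]) k (Phi q (∑ m ∈ s, C (R := ℚ_[q]) (c m) * X ^ m)
      - (∑ m ∈ s, C (R := ℚ_[q]) (c m) * X ^ m) ^ q)‖ ≤ (q : ℝ)⁻¹ := by
  have hq2 : 2 ≤ q := hq.out.two_le
  have hqinv : (0 : ℝ) ≤ (q : ℝ)⁻¹ := by positivity
  induction s using Finset.induction_on with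
  | empty =>
      have hz : Phi q (0 : PowerSeries ℚ_[q]) = 0 := by
        ext j
        rw [coeff_Phi]
        split <;> simp
      simp only [Finset.sum_empty, hz, zero_pow (by omega : q ≠ 0), sub_zero, map_zero,
        norm_zero]
      exact hqinv
  | @insert m t hm ih =>
      have hct : ∀ i ∈ t, ‖c i‖ ≤ 1 := fun i hi => hc i (Finset.mem_insert_of_mem hi)
      have hcm : ‖c m‖ ≤ 1 := hc m (Finset.mem_insert_self m t)
      set B : PowerSeries ℚ_[q] := ∑ j ∈ t, C (R := ℚ_[q]) (c j) * X ^ j with hB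
      set x : PowerSeries ℚ_[q] := C (R := ℚ_[q]) (c m) * X ^ m with hx
      have hBint : Intl q B := Intl.sum fun j hj => Intl.monomial_of (hct j hj) j
      have hxint : Intl q x := Intl.monomial_of hcm m
      rw [Finset.sum_insert hm]
      obtain ⟨S, hS, hSint⟩ : ∃ S, (x + B) ^ q = x ^ q + B ^ q + (q : PowerSeries ℚ_[q]) * S
          ∧ Intl q S := by
        refine ⟨x * B * ∑ k ∈ Ioo 0 q, x ^ (k - 1) * B ^ (q - k - 1)
          * ((q.choose k / q : ℕ) : PowerSeries ℚ_[q]),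
          by rw [add_pow_prime_eq hq.out x B]; ring, ?_⟩
        refine (hxint.mul hBint).mul ?_
        apply Intl.sum
        intro i _
        exact ((hxint.pow (i - 1)).mul (hBint.pow (q - i - 1))).mul (Intl.natCast _)
      have hxq : x ^ q = C (R := ℚ_[q]) ((c m) ^ q) * X ^ (q * m) := by
        rw [hx, mul_pow, ← map_pow, ← pow_mul, mul_comm m q]
      have hPhix : Phi q x = C (R := ℚ_[q]) (c m) * X ^ (q * m) := by
        rw [hx, C_mul_X_pow_eq, Phi_monomial hq2, C_mul_X_pow_eq]
      have hkey : Phi q (x + B) - (x + B) ^ q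
          = (C (R := ℚ_[q]) (c m - (c m) ^ q) * X ^ (q * m)) + (Phi q B - B ^ q)
            - (q : PowerSeries ℚ_[q]) * S := by
        rw [Phi_add, hS, hPhix, hxq, map_sub]
        ring
      rw [hkey, map_sub, map_add]
      have hterm1 : ‖coeff (R := ℚ_[q]) k (C (R := ℚ_[q]) (c m - (c m) ^ q) * X ^ (q * m))‖ ≤ (q : ℝ)⁻¹ := by
        rw [coeff_C_mul_X_pow]
        split
        · rw [← norm_neg, neg_sub]
          exact fermat_aux (c m) hcm
        · simp [hqinv]
      have hterm3 : ‖coeff (R := ℚ_[q]) k ((q : PowerSeries ℚ_[q]) * S)‖ ≤ (q : ℝ)⁻¹ := by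
        have hqC : ((q : PowerSeries ℚ_[q])) = C (R := ℚ_[q]) ((q : ℚ_[q])) := by rw [map_natCast]
        rw [hqC, coeff_C_mul, norm_mul, Padic.norm_p]
        calc (q : ℝ)⁻¹ * ‖coeff (R := ℚ_[q]) k S‖ ≤ (q : ℝ)⁻¹ * 1 := by
              exact mul_le_mul_of_nonneg_left (hSint k) hqinv
          _ = (q : ℝ)⁻¹ := mul_one _
      have h12 : ‖coeff (R := ℚ_[q]) k (C (R := ℚ_[q]) (c m - (c m) ^ q) * X ^ (q * m))
          + coeff (R := ℚ_[q]) k (Phi q B - B ^ q)‖ ≤ (q : ℝ)⁻¹ :=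
        le_trans (Padic.nonarchimedean _ _) (max_le hterm1 (ih hct))
      calc ‖_ + coeff (R := ℚ_[q]) k (Phi q B - B ^ q) - coeff (R := ℚ_[q]) k ((q : PowerSeries ℚ_[q]) * S)‖
          ≤ max ‖_ + coeff (R := ℚ_[q]) k (Phi q B - B ^ q)‖
            ‖-(coeff (R := ℚ_[q]) k ((q : PowerSeries ℚ_[q]) * S))‖ := by
            rw [sub_eq_add_neg]
            exact Padic.nonarchimedean _ _
        _ ≤ (q : ℝ)⁻¹ := max_le h12 (by rwa [norm_neg])

lemma norm_coeff_G {j : ℕ} (hj : 1 ≤ j) : ‖coeff (R := ℚ_[q]) j (AHG q ℚ_[q])‖ ≤ (q : ℝ)⁻¹ := by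
  have hq2 : 2 ≤ q := hq.out.two_le
  rw [AHG, coeff_pexp_smul_X]
  have hvj : padicValNat q (Nat.factorial j) + 1 ≤ j := by
    have h1 := sub_one_mul_padicValNat_factorial (p := q) j
    have hne : q.digits j ≠ [] := Nat.digits_ne_nil_iff_ne_zero.mpr (by omega)
    have hlast := Nat.getLast_digit_ne_zero q (show j ≠ 0 by omega)
    have hs1 : 1 ≤ (q.digits j).sum := by
      have hmem := List.getLast_mem hne
      have := List.single_le_sum (fun x (_ : x ∈ q.digits j) => Nat.zero_le x) _ hmem
      omega
    have hs2 : (q.digits j).sum ≤ j := Nat.digit_sum_le q j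
    have h2 : padicValNat q (Nat.factorial j) ≤ (q - 1) * padicValNat q (Nat.factorial j) :=
      Nat.le_mul_of_pos_left _ (by omega)
    omega
  set v : ℕ := padicValNat q (Nat.factorial j) with hv
  have hfac : Nat.factorial j = q ^ v * ((Nat.factorial j) / q ^ v) := by
    have h3 := Nat.ordProj_mul_ordCompl_eq_self (Nat.factorial j) q
    rw [Nat.factorization_def _ hq.out] at h3
    exact h3.symm
  set u : ℕ := (Nat.factorial j) / q ^ v with hu
  have hnotdvd : ¬ q ∣ u := by
    have h4 := Nat.not_dvd_ordCompl hq.out (Nat.factorial_ne_zero j)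
    rwa [Nat.factorization_def _ hq.out] at h4
  have hunorm : ‖(u : ℚ_[q])‖ = 1 := by
    have hle : ‖((u : ℤ) : ℚ_[q])‖ ≤ 1 := Padic.norm_int_le_one _
    have hnlt : ¬ ‖((u : ℤ) : ℚ_[q])‖ < 1 := by
      rw [Padic.norm_intCast_lt_one_iff]
      exact_mod_cast hnotdvd
    have h5 : ‖((u : ℤ) : ℚ_[q])‖ = 1 := le_antisymm hle (not_lt.mp hnlt)
    exact_mod_cast h5
  have hcast : ((Nat.factorial j : ℚ_[q])) = (q : ℚ_[q]) ^ v * (u : ℚ_[q]) := by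
    rw [← Nat.cast_pow, ← Nat.cast_mul, ← hfac]
  have hnf : ‖((Nat.factorial j : ℚ_[q]))‖ = ((q : ℝ)⁻¹) ^ v := by
    rw [hcast, norm_mul, norm_pow, Padic.norm_p, hunorm, mul_one]
  have hnorm : ‖(-(q : ℚ_[q])) ^ j / (Nat.factorial j : ℚ_[q])‖
      = ((q : ℝ)⁻¹) ^ j / ((q : ℝ)⁻¹) ^ v := by
    rw [norm_div, norm_pow, norm_neg, Padic.norm_p, hnf]
  rw [hnorm, div_eq_mul_inv, ← pow_sub₀ _ (by positivity : ((q : ℝ)⁻¹) ≠ 0) (by omega : v ≤ j)]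
  calc ((q : ℝ)⁻¹) ^ (j - v) ≤ ((q : ℝ)⁻¹) ^ 1 := by
        apply pow_le_pow_of_le_one (by positivity) ?_ (by omega)
        rw [inv_le_one_iff₀]
        right
        exact_mod_cast by omega
    _ = (q : ℝ)⁻¹ := pow_one _

lemma constantCoeff_AH : constantCoeff (R := ℚ_[q]) (AH q ℚ_[q]) = 1 := by
  rw [AH]
  exact constantCoeff_pexp _

theorem AH_norm_le (n : ℕ) : ‖coeff (R := ℚ_[q]) n (AH q ℚ_[q])‖ ≤ 1 := by
  induction n using Nat.strong_induction_on with
  | _ n IH =>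
  have hq2 : 2 ≤ q := hq.out.two_le
  have hqinv : (0 : ℝ) ≤ (q : ℝ)⁻¹ := by positivity
  set F : PowerSeries ℚ_[q] := AH q ℚ_[q] with hFdef
  rcases Nat.eq_zero_or_pos n with rfl | hn
  · have h0 : coeff (R := ℚ_[q]) 0 F = 1 := by
      have := constantCoeff_AH (q := q)
      simpa [hFdef] using this
    rw [h0, norm_one]
  -- main case
  set A : PowerSeries ℚ_[q] := ∑ m ∈ range n, C (R := ℚ_[q]) (coeff (R := ℚ_[q]) m F) * X ^ m with hAdef
  have hAc : ∀ k, coeff (R := ℚ_[q]) k A = if k < n then coeff (R := ℚ_[q]) k F else 0 := by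
    intro k
    rw [hAdef, map_sum]
    rw [Finset.sum_congr rfl (fun m _ => coeff_C_mul_X_pow (coeff (R := ℚ_[q]) m F) m k)]
    rw [Finset.sum_ite_eq (range n) k (fun m => coeff (R := ℚ_[q]) m F)]
    simp only [mem_range]
  have hAint : Intl q A := by
    intro k
    rw [hAc k]
    split
    · exact IH k (by omega)
    · simp
  have hdvd : (X : PowerSeries ℚ_[q]) ^ n ∣ F - A := by
    rw [X_pow_dvd_iff]
    intro m hm
    rw [map_sub, hAc m, if_pos hm, sub_self]
  have hlt : ∀ i, i < n → coeff (R := ℚ_[q]) i (F ^ q) = coeff (R := ℚ_[q]) i (A ^ q) := by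
    intro i hi
    have hdvd2 : (X : PowerSeries ℚ_[q]) ^ n ∣ F ^ q - A ^ q :=
      dvd_trans hdvd (sub_dvd_pow_sub_pow F A q)
    have := (X_pow_dvd_iff.mp hdvd2) i hi
    rw [map_sub, sub_eq_zero] at this
    exact this
  set B : PowerSeries ℚ_[q] := F - A with hBdef
  have hFAB : F = A + B := by rw [hBdef]; ring
  have hBc : ∀ m, m < n → coeff (R := ℚ_[q]) m B = 0 := fun m hm => (X_pow_dvd_iff.mp hdvd) m hm
  have hBn : coeff (R := ℚ_[q]) n B = coeff (R := ℚ_[q]) n F := by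
    rw [hBdef, map_sub, hAc n, if_neg (by omega), sub_zero]
  have hA0 : constantCoeff (R := ℚ_[q]) A = 1 := by
    have h1 : coeff (R := ℚ_[q]) 0 A = 1 := by
      rw [hAc 0, if_pos hn]
      have := constantCoeff_AH (q := q)
      simpa [hFdef] using this
    simpa using h1
  have hcoeffn : coeff (R := ℚ_[q]) n (F ^ q)
      = (q : ℚ_[q]) * coeff (R := ℚ_[q]) n F + coeff (R := ℚ_[q]) n (A ^ q) := by
    have hexp : F ^ q
        = ∑ k ∈ range (q + 1), A ^ k * B ^ (q - k) * (Nat.choose q k : PowerSeries ℚ_[q]) := by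
      rw [hFAB, add_pow]
    have hzero : ∀ k ∈ range (q - 1),
        coeff (R := ℚ_[q]) n (A ^ k * B ^ (q - k) * (Nat.choose q k : PowerSeries ℚ_[q])) = 0 := by
      intro k hk
      rw [mem_range] at hk
      have h2 : (X : PowerSeries ℚ_[q]) ^ (2 * n)
          ∣ A ^ k * B ^ (q - k) * (Nat.choose q k : PowerSeries ℚ_[q]) := by
        have hB2 : (X : PowerSeries ℚ_[q]) ^ (2 * n) ∣ B ^ (q - k) := by
          have h4 : (X : PowerSeries ℚ_[q]) ^ (2 * n) ∣ B ^ 2 := by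
            rw [two_mul, pow_add, pow_two]
            exact mul_dvd_mul hdvd hdvd
          exact dvd_trans h4 (pow_dvd_pow B (by omega))
        exact Dvd.dvd.mul_right (Dvd.dvd.mul_left hB2 _) _
      exact (X_pow_dvd_iff.mp h2) n (by omega)
    have hq1 : q - 1 + 1 = q := by omega
    have hq11 : q - 1 + 1 + 1 = q + 1 := by omega
    rw [hexp, map_sum, ← hq11, Finset.sum_range_succ, Finset.sum_range_succ,
      Finset.sum_eq_zero hzero, zero_add, hq1]
    congr 1
    · have hch : (Nat.choose q (q - 1)) = q := by
        have h6 := Nat.choose_symm (show 1 ≤ q by omega)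
        rw [Nat.choose_one_right] at h6
        exact h6
      rw [show q - (q - 1) = 1 by omega, pow_one, hch]
      have hqC : ((q : PowerSeries ℚ_[q])) = C (R := ℚ_[q]) ((q : ℚ_[q])) := by rw [map_natCast]
      rw [hqC, coeff_mul_C, coeff_mul]
      rw [Finset.sum_eq_single (0, n)]
      · rw [coeff_zero_eq_constantCoeff_apply, map_pow, hA0, one_pow, one_mul, hBn, mul_comm]
      · intro x hx hxne
        rw [Finset.HasAntidiagonal.mem_antidiagonal] at hx
        have hx2 : x.2 < n := by
          rcases Nat.lt_or_ge x.2 n with h | h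
          · exact h
          · exfalso
            apply hxne
            have h7 : x.2 = n := by omega
            have h8 : x.1 = 0 := by omega
            obtain ⟨a, b⟩ := x
            simp only [Prod.mk.injEq]
            exact ⟨h8, h7⟩
        rw [hBc x.2 hx2, mul_zero]
      · intro hni
        exact absurd (Finset.HasAntidiagonal.mem_antidiagonal.mpr (zero_add n)) hni
    · rw [Nat.sub_self, pow_zero, mul_one, Nat.choose_self, Nat.cast_one, mul_one]
  have hfeq : Phi q F = F ^ q * AHG q ℚ_[q] := AH_functional_eq hq2
  have hPhiFA : coeff (R := ℚ_[q]) n (Phi q F) = coeff (R := ℚ_[q]) n (Phi q A) := by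
    rw [coeff_Phi, coeff_Phi]
    by_cases h : q ∣ n
    · rw [if_pos h, if_pos h, hAc, if_pos (Nat.div_lt_self hn (by omega))]
    · rw [if_neg h, if_neg h]
  have hG0 : coeff (R := ℚ_[q]) 0 (AHG q ℚ_[q]) = 1 := by
    have h9 : constantCoeff (R := ℚ_[q]) (AHG q ℚ_[q]) = 1 := constantCoeff_pexp _
    simpa using h9
  have hsplit : coeff (R := ℚ_[q]) n (F ^ q * AHG q ℚ_[q])
      = coeff (R := ℚ_[q]) n (F ^ q) + ∑ x ∈ (antidiagonal n).erase (n, 0),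
          coeff (R := ℚ_[q]) x.1 (F ^ q) * coeff (R := ℚ_[q]) x.2 (AHG q ℚ_[q]) := by
    rw [coeff_mul, ← Finset.add_sum_erase _ _
      (Finset.HasAntidiagonal.mem_antidiagonal.mpr rfl : ((n, 0) : ℕ × ℕ) ∈ antidiagonal n)]
    rw [hG0, mul_one]
  set E : ℚ_[q] := ∑ x ∈ (antidiagonal n).erase (n, 0),
      coeff (R := ℚ_[q]) x.1 (F ^ q) * coeff (R := ℚ_[q]) x.2 (AHG q ℚ_[q]) with hE
  have hEnorm : ‖E‖ ≤ (q : ℝ)⁻¹ := by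
    apply norm_sum_le q hqinv
    intro x hx
    have hx1 := Finset.mem_of_mem_erase hx
    rw [Finset.HasAntidiagonal.mem_antidiagonal] at hx1
    have hx2 : 1 ≤ x.2 := by
      by_contra h
      have h2 : x.2 = 0 := by omega
      have h1 : x.1 = n := by omega
      apply Finset.notMem_erase (n, 0) (antidiagonal n)
      have h3 : x = (n, 0) := by
        obtain ⟨a, b⟩ := x
        simp only [Prod.mk.injEq]
        exact ⟨h1, h2⟩
      rwa [h3] at hx
    have hx1n : x.1 < n := by omega
    rw [norm_mul, hlt x.1 hx1n]
    calc ‖coeff (R := ℚ_[q]) x.1 (A ^ q)‖ * ‖coeff (R := ℚ_[q]) x.2 (AHG q ℚ_[q])‖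
        ≤ 1 * (q : ℝ)⁻¹ :=
          mul_le_mul (hAint.pow q x.1) (norm_coeff_G hx2) (norm_nonneg _) zero_le_one
      _ = (q : ℝ)⁻¹ := one_mul _
  have hmain : (q : ℚ_[q]) * coeff (R := ℚ_[q]) n F = coeff (R := ℚ_[q]) n (Phi q A - A ^ q) - E := by
    have h1 : coeff (R := ℚ_[q]) n (Phi q F) = coeff (R := ℚ_[q]) n (F ^ q) + E := by
      rw [hfeq, hsplit]
    rw [map_sub, ← hPhiFA, h1, hcoeffn]
    ring
  have hfrob : ‖coeff (R := ℚ_[q]) n (Phi q A - A ^ q)‖ ≤ (q : ℝ)⁻¹ := by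
    have h10 := frob (range n) (fun m => coeff (R := ℚ_[q]) m F)
      (fun i hi => IH i (by rw [mem_range] at hi; omega)) n
    simpa [hAdef] using h10
  have hnorm : ‖(q : ℚ_[q]) * coeff (R := ℚ_[q]) n F‖ ≤ (q : ℝ)⁻¹ := by
    rw [hmain, sub_eq_add_neg]
    exact le_trans (Padic.nonarchimedean _ _) (max_le hfrob (by rwa [norm_neg]))
  rw [norm_mul, Padic.norm_p] at hnorm
  have hqpos : (0 : ℝ) < (q : ℝ)⁻¹ := by positivity
  have h20 : (q : ℝ)⁻¹ * ‖coeff (R := ℚ_[q]) n F‖ ≤ (q : ℝ)⁻¹ * 1 := by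
    rw [mul_one]
    exact hnorm
  exact le_of_mul_le_mul_left h20 hqpos

end Padic

lemma map_pexp {K L : Type} [Field K] [CharZero K] [Field L] [CharZero L] (σ : K →+* L)
    (f : PowerSeries K) : PowerSeries.map σ (pexp f) = pexp (PowerSeries.map σ f) := by
  ext d
  rw [coeff_map, coeff_pexp, coeff_pexp, map_sum]
  refine Finset.sum_congr rfl fun n _ => ?_
  rw [map_div₀, map_natCast, ← map_pow, coeff_map]

lemma map_AHlog {K L : Type} [Field K] [CharZero K] [Field L] [CharZero L] (σ : K →+* L)
    (pp : ℕ) : PowerSeries.map σ (AHlog pp K) = AHlog pp L := by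
  ext n
  rw [coeff_map, coeff_AHlog, coeff_AHlog, apply_ite σ, map_zero, map_inv₀, map_natCast]

end AHwork

/-- The Artin–Hasse exponential `E_p(t)` has all of its coefficients in `ℤ_(p)`, i.e. every
coefficient (a rational number) has `p`-adic norm at most `1`. -/
theorem stmt_4 (p : ℕ) [hp : Fact p.Prime] (n : ℕ) :
    ‖((PowerSeries.coeff (R := ℚ) n (AH p ℚ) : ℚ) : ℚ_[p])‖ ≤ 1 := by
  have hmap : PowerSeries.map (Rat.castHom ℚ_[p]) (AH p ℚ) = AH p ℚ_[p] := by
    rw [AH, AH, AHwork.map_pexp, AHwork.map_AHlog]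
  have h1 : ((PowerSeries.coeff (R := ℚ) n (AH p ℚ) : ℚ) : ℚ_[p])
      = PowerSeries.coeff (R := ℚ_[p]) n (AH p ℚ_[p]) := by
    rw [← hmap, PowerSeries.coeff_map]
    rfl
  rw [h1]
  exact AHwork.AH_norm_le n
end

section
/- Let R be the ring of integers of a p-adic field with valuation ν normalized by ν(p)=1, and let f(X) = 1 + Σ_{j≥1} a_j X^j ∈ R⟦X⟧ with ν(a_j) > 0 for all j and inf_j ν(a_j) ≥ B > 0. If f(X)^p has only finitely many coefficients of valuation strictly smaller than p/(p−1), then f(X) has only finitely many coefficients of valuation strictly smaller than 1/(p−1). -/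
open PowerSeries Finset

namespace S13

variable {K : Type} [Field K] (v : K → ℚ)

lemma v_one (hmul : ∀ x y : K, x ≠ 0 → y ≠ 0 → v (x * y) = v x + v y) : v 1 = 0 := by
  have := hmul 1 1 one_ne_zero one_ne_zero
  simp only [mul_one] at this
  linarith

lemma v_neg (hmul : ∀ x y : K, x ≠ 0 → y ≠ 0 → v (x * y) = v x + v y)
    (x : K) (hx : x ≠ 0) : v (-x) = v x := by
  have h1 : v ((-1 : K) * (-1)) = v (-1) + v (-1) := hmul _ _ (by norm_num) (by norm_num)
  rw [neg_one_mul, neg_neg] at h1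
  have h0 := v_one v hmul
  have hm1 : v (-1 : K) = 0 := by linarith
  have := hmul (-1) x (by norm_num) hx
  rw [neg_one_mul] at this
  rw [this, hm1, zero_add]

lemma v_nat [CharZero K]
    (hmul : ∀ x y : K, x ≠ 0 → y ≠ 0 → v (x * y) = v x + v y)
    (hadd : ∀ x y : K, x ≠ 0 → y ≠ 0 → x + y ≠ 0 → min (v x) (v y) ≤ v (x + y))
    (m : ℕ) (hm : m ≠ 0) : 0 ≤ v (m : K) := by
  induction m with
  | zero => exact absurd rfl hm
  | succ n ih =>
    rcases Nat.eq_zero_or_pos n with hn | hn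
    · subst hn; simpa using (v_one v hmul).ge
    · have hn0 : (n : K) ≠ 0 := Nat.cast_ne_zero.mpr hn.ne'
      have hsum : (n : K) + 1 ≠ 0 := by
        have : ((n+1 : ℕ) : K) ≠ 0 := Nat.cast_ne_zero.mpr (Nat.succ_ne_zero n)
        simpa [Nat.cast_add] using this
      have := hadd (n : K) 1 hn0 one_ne_zero hsum
      have h01 := v_one v hmul
      have hle : (0:ℚ) ≤ min (v (n:K)) (v (1:K)) := le_min (ih hn.ne') (by rw [h01])
      have : (0:ℚ) ≤ v ((n:K) + 1) := le_trans hle this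
      simpa [Nat.cast_add] using this

lemma v_pow (hmul : ∀ x y : K, x ≠ 0 → y ≠ 0 → v (x * y) = v x + v y)
    (x : K) (hx : x ≠ 0) (e : ℕ) : v (x ^ e) = e * v x := by
  induction e with
  | zero => simpa using v_one v hmul
  | succ n ih =>
    rw [pow_succ, hmul _ _ (pow_ne_zero n hx) hx, ih]
    push_cast; ring

/-- `x = 0` or `v x ≥ t` (real threshold). -/
def VB (t : ℝ) (x : K) : Prop := x = 0 ∨ t ≤ (v x : ℝ)

lemma VB_zero (t : ℝ) : VB v t (0 : K) := Or.inl rfl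

lemma VB_add (hadd : ∀ x y : K, x ≠ 0 → y ≠ 0 → x + y ≠ 0 → min (v x) (v y) ≤ v (x + y))
    {t : ℝ} {x y : K} (hx : VB v t x) (hy : VB v t y) : VB v t (x + y) := by
  by_cases hx0 : x = 0
  · subst hx0; simpa using hy
  by_cases hy0 : y = 0
  · subst hy0; simpa using hx
  rcases hx with rfl | hx
  · exact absurd rfl hx0
  rcases hy with rfl | hy
  · exact absurd rfl hy0
  by_cases hxy : x + y = 0
  · exact Or.inl hxy
  · right
    have h := hadd x y hx0 hy0 hxy
    have hmin : t ≤ ((min (v x) (v y) : ℚ) : ℝ) := by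
      rw [Rat.cast_min]; exact le_min hx hy
    exact le_trans hmin (by exact_mod_cast h)

lemma VB_mul (hmul : ∀ x y : K, x ≠ 0 → y ≠ 0 → v (x * y) = v x + v y)
    {s t : ℝ} {x y : K} (hx : VB v s x) (hy : VB v t y) : VB v (s + t) (x * y) := by
  rcases hx with rfl | hx
  · exact Or.inl (zero_mul y)
  rcases hy with rfl | hy
  · exact Or.inl (mul_zero x)
  by_cases hx0 : x = 0
  · exact Or.inl (by rw [hx0, zero_mul])
  by_cases hy0 : y = 0
  · exact Or.inl (by rw [hy0, mul_zero])
  right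
  rw [hmul x y hx0 hy0]
  push_cast
  exact add_le_add hx hy

lemma VB_sum (hadd : ∀ x y : K, x ≠ 0 → y ≠ 0 → x + y ≠ 0 → min (v x) (v y) ≤ v (x + y))
    {ι : Type*} (s : Finset ι) (F : ι → K) (t : ℝ)
    (h : ∀ i ∈ s, VB v t (F i)) : VB v t (∑ i ∈ s, F i) :=
  Finset.sum_induction F (VB v t) (fun _ _ ha hb => VB_add v hadd ha hb) (VB_zero v t) h

lemma VB_nat [CharZero K]
    (hmul : ∀ x y : K, x ≠ 0 → y ≠ 0 → v (x * y) = v x + v y)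
    (hadd : ∀ x y : K, x ≠ 0 → y ≠ 0 → x + y ≠ 0 → min (v x) (v y) ≤ v (x + y))
    (m : ℕ) : VB v 0 ((m : ℕ) : K) := by
  rcases Nat.eq_zero_or_pos m with hm | hm
  · subst hm; exact Or.inl (by simp)
  · exact Or.inr (by exact_mod_cast v_nat v hmul hadd m hm.ne')

lemma VB_cast_dvd [CharZero K] {p : ℕ}
    (hmul : ∀ x y : K, x ≠ 0 → y ≠ 0 → v (x * y) = v x + v y)
    (hadd : ∀ x y : K, x ≠ 0 → y ≠ 0 → x + y ≠ 0 → min (v x) (v y) ≤ v (x + y))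
    (hvp : v (p : K) = 1) (hp0 : p ≠ 0)
    {c : ℕ} (hc : p ∣ c) : VB v 1 ((c : ℕ) : K) := by
  rcases Nat.eq_zero_or_pos c with h0 | h0
  · subst h0; exact Or.inl (by simp)
  obtain ⟨m, rfl⟩ := hc
  have hm0 : m ≠ 0 := by rintro rfl; simp at h0
  have hpK : ((p : ℕ) : K) ≠ 0 := Nat.cast_ne_zero.mpr hp0
  have hmK : ((m : ℕ) : K) ≠ 0 := Nat.cast_ne_zero.mpr hm0
  right
  have hcast : (((p * m : ℕ) : K)) = ((p : ℕ) : K) * ((m : ℕ) : K) := by push_cast; ring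
  rw [hcast, hmul _ _ hpK hmK, hvp]
  have h2 : (0:ℝ) ≤ ((v ((m:ℕ):K)) : ℝ) := by exact_mod_cast v_nat v hmul hadd m hm0
  push_cast at h2 ⊢
  linarith

/-- every coefficient is zero or has `v ≥ t` -/
def GE (t : ℝ) (φ : PowerSeries K) : Prop := ∀ m, VB v t (PowerSeries.coeff m φ)

lemma GE_mul (hmul : ∀ x y : K, x ≠ 0 → y ≠ 0 → v (x * y) = v x + v y)
    (hadd : ∀ x y : K, x ≠ 0 → y ≠ 0 → x + y ≠ 0 → min (v x) (v y) ≤ v (x + y))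
    {s t : ℝ} {φ ψ : PowerSeries K} (hφ : GE v s φ) (hψ : GE v t ψ) :
    GE v (s + t) (φ * ψ) := by
  intro m
  rw [PowerSeries.coeff_mul]
  exact VB_sum v hadd _ _ _ (fun q _ => VB_mul v hmul (hφ q.1) (hψ q.2))

lemma GE_one (hmul : ∀ x y : K, x ≠ 0 → y ≠ 0 → v (x * y) = v x + v y) :
    GE v 0 (1 : PowerSeries K) := by
  intro m
  rw [PowerSeries.coeff_one]
  split
  · exact Or.inr (by rw [v_one v hmul]; simp)
  · exact Or.inl rfl

lemma GE_pow (hmul : ∀ x y : K, x ≠ 0 → y ≠ 0 → v (x * y) = v x + v y)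
    (hadd : ∀ x y : K, x ≠ 0 → y ≠ 0 → x + y ≠ 0 → min (v x) (v y) ≤ v (x + y))
    {φ : PowerSeries K} (hφ : GE v 0 φ) (e : ℕ) : GE v 0 (φ ^ e) := by
  induction e with
  | zero => simpa using GE_one v hmul
  | succ n ih =>
    rw [pow_succ]
    have := GE_mul v hmul hadd ih hφ
    simpa using this

lemma GE_pow_pos (hmul : ∀ x y : K, x ≠ 0 → y ≠ 0 → v (x * y) = v x + v y)
    (hadd : ∀ x y : K, x ≠ 0 → y ≠ 0 → x + y ≠ 0 → min (v x) (v y) ≤ v (x + y))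
    {t : ℝ} {φ : PowerSeries K} (h0 : GE v 0 φ) (ht : GE v t φ)
    (e : ℕ) (he : 1 ≤ e) : GE v t (φ ^ e) := by
  obtain ⟨k, rfl⟩ := Nat.exists_eq_add_of_le he
  rw [add_comm, pow_succ]
  have := GE_mul v hmul hadd (GE_pow v hmul hadd h0 k) ht
  simpa using this

lemma GE_natCast [CharZero K]
    (hmul : ∀ x y : K, x ≠ 0 → y ≠ 0 → v (x * y) = v x + v y)
    (hadd : ∀ x y : K, x ≠ 0 → y ≠ 0 → x + y ≠ 0 → min (v x) (v y) ≤ v (x + y))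
    (c : ℕ) : GE v 0 ((c : ℕ) : PowerSeries K) := by
  intro m
  have : ((c : ℕ) : PowerSeries K) = PowerSeries.C ((c : ℕ) : K) := (map_natCast (PowerSeries.C) c)
  rw [this, PowerSeries.coeff_C]
  split
  · exact VB_nat v hmul hadd c
  · exact Or.inl rfl

/-- support bounded above -/
def SLe (a : ℕ) (φ : PowerSeries K) : Prop := ∀ m, a < m → PowerSeries.coeff m φ = 0

/-- support bounded below -/
def SGe (b : ℕ) (φ : PowerSeries K) : Prop := ∀ m, m < b → PowerSeries.coeff m φ = 0

lemma SLe_mul {a b : ℕ} {φ ψ : PowerSeries K} (hφ : SLe a φ) (hψ : SLe b ψ) :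
    SLe (a + b) (φ * ψ) := by
  intro m hm
  rw [PowerSeries.coeff_mul]
  apply Finset.sum_eq_zero
  rintro ⟨x, y⟩ hxy
  rw [Finset.HasAntidiagonal.mem_antidiagonal] at hxy
  simp only
  rcases lt_or_ge a x with hx | hx
  · rw [hφ x hx, zero_mul]
  · have : b < y := by omega
    rw [hψ y this, mul_zero]

lemma SLe_pow {a : ℕ} {φ : PowerSeries K} (hφ : SLe a φ) (e : ℕ) : SLe (e * a) (φ ^ e) := by
  induction e with
  | zero =>
    intro m hm
    rw [pow_zero, PowerSeries.coeff_one, if_neg (by omega)]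
  | succ n ih =>
    rw [pow_succ]
    have := SLe_mul ih hφ
    rwa [Nat.succ_mul]

lemma SLe_natCast (c : ℕ) : SLe 0 ((c : ℕ) : PowerSeries K) := by
  intro m hm
  have : ((c : ℕ) : PowerSeries K) = PowerSeries.C ((c : ℕ) : K) := (map_natCast (PowerSeries.C) c)
  rw [this, PowerSeries.coeff_C, if_neg (by omega)]

lemma SGe_mul {a b : ℕ} {φ ψ : PowerSeries K} (hφ : SGe a φ) (hψ : SGe b ψ) :
    SGe (a + b) (φ * ψ) := by
  intro m hm
  rw [PowerSeries.coeff_mul]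
  apply Finset.sum_eq_zero
  rintro ⟨x, y⟩ hxy
  rw [Finset.HasAntidiagonal.mem_antidiagonal] at hxy
  simp only
  rcases lt_or_ge x a with hx | hx
  · rw [hφ x hx, zero_mul]
  · have : y < b := by omega
    rw [hψ y this, mul_zero]

lemma SGe_zero (φ : PowerSeries K) : SGe 0 φ := fun m hm => absurd hm (Nat.not_lt_zero m)

lemma SGe_mulL {b : ℕ} {φ ψ : PowerSeries K} (hφ : SGe b φ) : SGe b (φ * ψ) := by
  have := SGe_mul hφ (SGe_zero ψ)
  simpa using this

lemma SGe_mulR {b : ℕ} {φ ψ : PowerSeries K} (hψ : SGe b ψ) : SGe b (φ * ψ) := by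
  have := SGe_mul (SGe_zero φ) hψ
  simpa using this

lemma SGe_pow {b : ℕ} {φ : PowerSeries K} (hφ : SGe b φ) (e : ℕ) : SGe (e * b) (φ ^ e) := by
  induction e with
  | zero => intro m hm; omega
  | succ n ih =>
    rw [pow_succ]
    have := SGe_mul ih hφ
    rwa [Nat.succ_mul]

end S13


/-- Let `K` be a `p`-adic field with additive valuation `v` normalized by `v p = 1`, and
let `f = 1 + Σ_{j≥1} a_j X^j` be a power series whose (nonzero) higher coefficients all
have valuation bounded below by some `B > 0`.  If `f^p` has only finitely many
coefficients of valuation strictly smaller than `p/(p-1)`, then `f` has only finitely many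
coefficients of valuation strictly smaller than `1/(p-1)`. -/
theorem stmt_13 (p : ℕ) (hp : p.Prime) (K : Type) [Field K] [CharZero K]
    (v : K → ℚ)
    (hmul : ∀ x y : K, x ≠ 0 → y ≠ 0 → v (x * y) = v x + v y)
    (hadd : ∀ x y : K, x ≠ 0 → y ≠ 0 → x + y ≠ 0 → min (v x) (v y) ≤ v (x + y))
    (hvp : v (p : K) = 1)
    (B : ℚ) (hB : 0 < B)
    (f : PowerSeries K) (h0 : PowerSeries.constantCoeff f = 1)
    (hcoeff : ∀ j : ℕ, 1 ≤ j → PowerSeries.coeff j f ≠ 0 →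
      B ≤ v (PowerSeries.coeff j f))
    (hfin : {j : ℕ | PowerSeries.coeff j (f ^ p) ≠ 0 ∧
        v (PowerSeries.coeff j (f ^ p)) < (p : ℚ) / ((p : ℚ) - 1)}.Finite) :
    {j : ℕ | PowerSeries.coeff j f ≠ 0 ∧
        v (PowerSeries.coeff j f) < 1 / ((p : ℚ) - 1)}.Finite := by
  classical
  by_contra hinf
  obtain ⟨N, hN⟩ := hfin.bddAbove
  set M : ℕ := max (N + 1) 1 with hM
  have hM1 : 1 ≤ M := le_max_right _ _
  have hp2 : 2 ≤ p := hp.two_le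
  have hp0 : p ≠ 0 := hp.pos.ne'
  have hppos : (0:ℝ) < (p:ℝ) := by exact_mod_cast hp.pos
  have hp1R : (1:ℝ) ≤ (p:ℝ) - 1 := by
    have : (2:ℝ) ≤ (p:ℝ) := by exact_mod_cast hp2
    linarith
  -- a bad index beyond M
  have hex : ∃ j, M ≤ j ∧ PowerSeries.coeff j f ≠ 0 ∧
      v (PowerSeries.coeff j f) < 1 / ((p : ℚ) - 1) := by
    by_contra hno
    push_neg at hno
    apply hinf
    apply (Set.finite_Iio M).subset
    intro j hj
    simp only [Set.mem_setOf_eq] at hj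
    by_contra h'
    have hMj : M ≤ j := le_of_not_gt (by simpa [Set.mem_Iio] using h')
    exact absurd hj.2 (not_lt.mpr (hno j hMj hj.1))
  obtain ⟨j0, hj0M, hj0ne, hj0lt⟩ := hex
  -- the tail infimum
  set T : Set ℝ := {x | ∃ m, M ≤ m ∧ PowerSeries.coeff m f ≠ 0 ∧
      ((v (PowerSeries.coeff m f) : ℚ) : ℝ) = x} with hT
  have hTne : T.Nonempty := ⟨_, j0, hj0M, hj0ne, rfl⟩
  have hTbdd : BddBelow T := by
    refine ⟨(B : ℝ), ?_⟩
    rintro x ⟨m, hm, hne, rfl⟩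
    exact_mod_cast hcoeff m (le_trans hM1 hm) hne
  set lam : ℝ := sInf T with hlamdef
  have hlam_le : ∀ m, M ≤ m → PowerSeries.coeff m f ≠ 0 →
      lam ≤ ((v (PowerSeries.coeff m f)) : ℝ) :=
    fun m hm hne => csInf_le hTbdd ⟨m, hm, hne, rfl⟩
  have hlamB : (B : ℝ) ≤ lam := le_csInf hTne (by
    rintro x ⟨m, hm, hne, rfl⟩
    exact_mod_cast hcoeff m (le_trans hM1 hm) hne)
  have hBR : (0:ℝ) < (B:ℝ) := by exact_mod_cast hB
  have hcast1 : ((1 / ((p:ℚ) - 1) : ℚ) : ℝ) = 1 / ((p:ℝ) - 1) := by push_cast; ring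
  have hlam_lt : lam < 1 / ((p:ℝ) - 1) := by
    refine lt_of_le_of_lt (hlam_le j0 hj0M hj0ne) ?_
    rw [← hcast1]
    exact_mod_cast hj0lt
  set θ : ℝ := min (1 / ((p:ℝ) - 1)) ((1 + lam) / p) with hθdef
  have hθ : lam < θ := by
    apply lt_min hlam_lt
    rw [lt_div_iff₀ hppos]
    have h1 : lam * ((p:ℝ) - 1) < 1 := (lt_div_iff₀ (by linarith)).mp hlam_lt
    nlinarith
  obtain ⟨x, hxT, hxθ⟩ := (csInf_lt_iff hTbdd hTne).mp hθ
  obtain ⟨r, hrM, hrne, rfl⟩ := hxT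
  have hr1 : 1 ≤ r := le_trans hM1 hrM
  set n : ℕ := p * r with hn
  have hrn : r ≤ n := Nat.le_mul_of_pos_left r hp.pos
  have hn1 : 1 ≤ n := le_trans hr1 hrn
  -- building blocks
  set c0 : PowerSeries K := PowerSeries.mk
    (fun m => if 1 ≤ m ∧ m < r then PowerSeries.coeff m f else 0) with hc0def
  set c : PowerSeries K := PowerSeries.mk
    (fun m => if 1 ≤ m ∧ m ≤ r then PowerSeries.coeff m f else 0) with hcdef
  set d : PowerSeries K := PowerSeries.mk
    (fun m => if r < m ∧ m ≤ n then PowerSeries.coeff m f else 0) with hddef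
  set hrem : PowerSeries K := f - 1 - c - d with hremdef
  set g : PowerSeries K := c + d with hgdef
  -- support facts
  have hSc : S13.SLe r c := by
    intro m hm
    simp only [hcdef, PowerSeries.coeff_mk]
    rw [if_neg (by omega)]
  have hSc0 : S13.SLe (r - 1) c0 := by
    intro m hm
    simp only [hc0def, PowerSeries.coeff_mk]
    rw [if_neg (by omega)]
  have hSd : S13.SGe (r + 1) d := by
    intro m hm
    simp only [hddef, PowerSeries.coeff_mk]
    rw [if_neg (by omega)]
  have hGc : S13.GE v 0 c := by
    intro m
    simp only [hcdef, PowerSeries.coeff_mk]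
    split_ifs with hcond
    · by_cases hz : PowerSeries.coeff m f = 0
      · exact Or.inl hz
      · exact Or.inr (le_trans hBR.le (by exact_mod_cast hcoeff m hcond.1 hz))
    · exact Or.inl rfl
  have hGd0 : S13.GE v 0 d := by
    intro m
    simp only [hddef, PowerSeries.coeff_mk]
    split_ifs with hcond
    · by_cases hz : PowerSeries.coeff m f = 0
      · exact Or.inl hz
      · exact Or.inr (le_trans hBR.le (by exact_mod_cast hcoeff m (by omega) hz))
    · exact Or.inl rfl
  have hGdl : S13.GE v lam d := by
    intro m
    simp only [hddef, PowerSeries.coeff_mk]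
    split_ifs with hcond
    · by_cases hz : PowerSeries.coeff m f = 0
      · exact Or.inl hz
      · exact Or.inr (hlam_le m (by omega) hz)
    · exact Or.inl rfl
  have hSrem : S13.SGe (n + 1) hrem := by
    intro m hm
    simp only [hremdef, map_sub, PowerSeries.coeff_one, hcdef, hddef, PowerSeries.coeff_mk]
    by_cases hm0 : m = 0
    · subst hm0
      rw [if_pos rfl, if_neg (by omega), if_neg (by omega)]
      have : PowerSeries.coeff 0 f = 1 := by
        rw [PowerSeries.coeff_zero_eq_constantCoeff, h0]
      rw [this]; ring
    · by_cases hmr : m ≤ r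
      · rw [if_neg hm0, if_pos ⟨by omega, hmr⟩, if_neg (by omega)]; ring
      · rw [if_neg hm0, if_neg (by omega), if_pos ⟨by omega, by omega⟩]; ring
  have hfd : f = 1 + c + d + hrem := by rw [hremdef]; ring
  -- step 1 : kill the high-order tail
  have step1 : PowerSeries.coeff n (f ^ p) = PowerSeries.coeff n ((1 + c + d) ^ p) := by
    conv_lhs => rw [hfd]
    rw [show ((1:PowerSeries K) + c + d + hrem) = ((1 + c + d) + hrem) by ring, add_pow, map_sum]
    rw [Finset.sum_eq_single_of_mem p (Finset.self_mem_range_succ p)]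
    · rw [Nat.sub_self, pow_zero, mul_one, Nat.choose_self, Nat.cast_one, mul_one]
    · intro k hk hkp
      have hk' : k < p := by rw [Finset.mem_range] at hk; omega
      have hb : S13.SGe (n + 1) ((1 + c + d) ^ k * hrem ^ (p - k) *
          ((p.choose k : ℕ) : PowerSeries K)) := by
        apply S13.SGe_mulL
        apply S13.SGe_mulR
        intro m hm
        apply S13.SGe_pow hSrem (p - k) m
        have h1 : n + 1 ≤ (p - k) * (n + 1) := Nat.le_mul_of_pos_left _ (by omega)
        omega
      exact hb n (Nat.lt_succ_self n)
  -- step 2 : binomial in terms of g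
  have step2 : PowerSeries.coeff n ((1 + c + d) ^ p) =
      ∑ k ∈ Finset.range (p + 1), ((p.choose k : ℕ) : K) *
        PowerSeries.coeff n (g ^ (p - k)) := by
    rw [show ((1:PowerSeries K) + c + d) = 1 + g by rw [hgdef]; ring, add_pow, map_sum]
    refine Finset.sum_congr rfl fun k hk => ?_
    rw [one_pow, one_mul,
      show ((p.choose k : ℕ) : PowerSeries K) = PowerSeries.C ((p.choose k : ℕ) : K) from
        map_natCast (PowerSeries.C) _,
      PowerSeries.coeff_mul_C, mul_comm]
  -- splitting a range sum
  have hsplit : ∀ F : ℕ → K, ∑ k ∈ Finset.range (p + 1), F k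
      = F 0 + (∑ k ∈ Finset.Ioo 0 p, F k) + F p := by
    intro F
    have hset : Finset.range (p + 1) = insert 0 (insert p (Finset.Ioo 0 p)) := by
      ext m
      simp only [Finset.mem_range, Finset.mem_insert, Finset.mem_Ioo]
      omega
    rw [hset, Finset.sum_insert (by simp only [Finset.mem_insert, Finset.mem_Ioo]; omega),
      Finset.sum_insert (by simp only [Finset.mem_Ioo]; omega)]
    ring
  -- vanishing of pure-c and pure-d powers
  have hcez : ∀ e, 1 ≤ e → e < p → PowerSeries.coeff n (c ^ e) = 0 := by
    intro e he1 hep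
    apply S13.SLe_pow hSc e n
    calc e * r < p * r := Nat.mul_lt_mul_of_lt_of_le hep (le_refl r) hr1
      _ = n := hn.symm
  have hdez : PowerSeries.coeff n (d ^ p) = 0 := by
    apply S13.SGe_pow hSd p n
    have h1 : p * (r + 1) = p * r + p := Nat.mul_succ p r
    omega
  -- mixed terms have valuation ≥ lam
  have hgoodcd : ∀ i e : ℕ, i < e →
      S13.VB v lam (PowerSeries.coeff n (c ^ i * d ^ (e - i))) := by
    intro i e hie
    have h1 : S13.GE v lam (d ^ (e - i)) :=
      S13.GE_pow_pos v hmul hadd hGd0 hGdl _ (by omega)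
    have h2 : S13.GE v 0 (c ^ i) := S13.GE_pow v hmul hadd hGc i
    have h3 := S13.GE_mul v hmul hadd h2 h1
    rw [zero_add] at h3
    exact h3 n
  -- intermediate powers of g
  have hge : ∀ e, 1 ≤ e → e < p → S13.VB v lam (PowerSeries.coeff n (g ^ e)) := by
    intro e he1 hep
    rw [hgdef, add_pow, map_sum]
    apply S13.VB_sum v hadd
    intro i hi
    rw [Finset.mem_range] at hi
    by_cases hie : i = e
    · subst hie
      rw [Nat.sub_self, pow_zero, mul_one, Nat.choose_self, Nat.cast_one, mul_one]
      exact Or.inl (hcez i he1 hep)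
    · have hie' : i < e := by omega
      rw [show ((e.choose i : ℕ) : PowerSeries K) = PowerSeries.C ((e.choose i : ℕ) : K) from
          map_natCast (PowerSeries.C) _, PowerSeries.coeff_mul_C]
      have h2 := S13.VB_mul v hmul (hgoodcd i e hie') (S13.VB_nat v hmul hadd (e.choose i))
      rwa [add_zero] at h2
  -- the key coefficient of c ^ p
  have hcp : PowerSeries.coeff n (c ^ p) = (PowerSeries.coeff r f) ^ p := by
    have hdecomp : c = c0 + PowerSeries.C (PowerSeries.coeff r f) * PowerSeries.X ^ r := by
      ext m
      simp only [hcdef, hc0def, map_add, PowerSeries.coeff_mk, PowerSeries.coeff_C_mul_X_pow]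
      split_ifs with h1 h2 h3 h4 h5
      all_goals try (exfalso; omega)
      all_goals subst_vars
      all_goals simp only [zero_add, add_zero]
    rw [hdecomp, add_pow, map_sum]
    have hz : ∀ b ∈ Finset.range (p + 1), b ≠ 0 →
        PowerSeries.coeff n (c0 ^ b *
          (PowerSeries.C (PowerSeries.coeff r f) * PowerSeries.X ^ r) ^ (p - b) *
          ((p.choose b : ℕ) : PowerSeries K)) = 0 := by
      intro b hb hb0
      rw [Finset.mem_range] at hb
      have hb1 : 1 ≤ b := by omega
      have hS1 : S13.SLe (b * (r - 1)) (c0 ^ b) := S13.SLe_pow hSc0 b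
      have hSX : S13.SLe r (PowerSeries.C (PowerSeries.coeff r f) * PowerSeries.X ^ r) := by
        intro m hm
        rw [PowerSeries.coeff_C_mul_X_pow, if_neg (by omega)]
      have hS2 := S13.SLe_pow hSX (p - b)
      have hS3 := S13.SLe_mul (S13.SLe_mul hS1 hS2) (S13.SLe_natCast (p.choose b))
      apply hS3 n
      have e1 : b * (r - 1) + b = b * r := by
        rw [← Nat.mul_succ]
        congr 1
        omega
      have e2 : (p - b) * r + b * r = p * r := by
        rw [← Nat.add_mul]
        congr 1
        omega
      have hnval : n = p * r := hn
      omega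
    rw [Finset.sum_eq_single_of_mem (0:ℕ) (Finset.mem_range.mpr (by omega)) hz]
    rw [pow_zero, one_mul, Nat.sub_zero, Nat.choose_zero_right, Nat.cast_one, mul_one]
    rw [mul_pow, ← map_pow, ← pow_mul, PowerSeries.coeff_C_mul_X_pow,
      if_pos (by rw [hn, Nat.mul_comm])]
  -- step 3 : coefficient of g ^ p
  have step3 : PowerSeries.coeff n (g ^ p) = (PowerSeries.coeff r f) ^ p +
      ∑ i ∈ Finset.Ioo 0 p, ((p.choose i : ℕ) : K) *
        PowerSeries.coeff n (c ^ i * d ^ (p - i)) := by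
    rw [hgdef, add_pow, map_sum]
    have hconv : ∀ i ∈ Finset.range (p + 1),
        PowerSeries.coeff n (c ^ i * d ^ (p - i) * ((p.choose i : ℕ) : PowerSeries K)) =
        ((p.choose i : ℕ) : K) * PowerSeries.coeff n (c ^ i * d ^ (p - i)) := by
      intro i hi
      rw [show ((p.choose i : ℕ) : PowerSeries K) = PowerSeries.C ((p.choose i : ℕ) : K) from
        map_natCast (PowerSeries.C) _, PowerSeries.coeff_mul_C, mul_comm]
    rw [Finset.sum_congr rfl hconv, hsplit]
    simp only [Nat.choose_zero_right, Nat.choose_self, Nat.cast_one, Nat.sub_zero,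
      Nat.sub_self, pow_zero, one_mul, mul_one, hdez, hcp]
    ring
  -- assemble
  set S : K := (∑ i ∈ Finset.Ioo 0 p, ((p.choose i : ℕ) : K) *
      PowerSeries.coeff n (c ^ i * d ^ (p - i))) +
    (∑ k ∈ Finset.Ioo 0 p, ((p.choose k : ℕ) : K) *
      PowerSeries.coeff n (g ^ (p - k))) with hSdef
  have hmain : PowerSeries.coeff n (f ^ p) = (PowerSeries.coeff r f) ^ p + S := by
    have hgz : PowerSeries.coeff n (1 : PowerSeries K) = 0 := by
      rw [PowerSeries.coeff_one, if_neg (by omega)]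
    rw [step1, step2, hsplit (fun k => ((p.choose k : ℕ) : K) *
      PowerSeries.coeff n (g ^ (p - k)))]
    simp only [Nat.choose_zero_right, Nat.choose_self, Nat.cast_one, Nat.sub_zero,
      Nat.sub_self, pow_zero, one_mul, mul_one, hgz, step3, hSdef]
    ring
  -- the correction has valuation ≥ 1 + lam
  have hVS : S13.VB v (1 + lam) S := by
    rw [hSdef]
    apply S13.VB_add v hadd
    · apply S13.VB_sum v hadd
      intro i hi
      rw [Finset.mem_Ioo] at hi
      exact S13.VB_mul v hmul
        (S13.VB_cast_dvd v hmul hadd hvp hp0 (hp.dvd_choose_self (by omega) hi.2))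
        (hgoodcd i p hi.2)
    · apply S13.VB_sum v hadd
      intro k hk
      rw [Finset.mem_Ioo] at hk
      exact S13.VB_mul v hmul
        (S13.VB_cast_dvd v hmul hadd hvp hp0 (hp.dvd_choose_self (by omega) hk.2))
        (hge (p - k) (by omega) (by omega))
  -- numeric facts about the chosen index r
  set A : K := (PowerSeries.coeff r f) ^ p with hAdef
  have hAne : A ≠ 0 := pow_ne_zero _ hrne
  have hvA : v A = (p : ℚ) * v (PowerSeries.coeff r f) := by
    rw [hAdef, S13.v_pow v hmul _ hrne p]
  have hvr1 : ((v (PowerSeries.coeff r f) : ℚ) : ℝ) < 1 / ((p:ℝ) - 1) :=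
    lt_of_lt_of_le hxθ (min_le_left _ _)
  have hvrp : (p:ℝ) * ((v (PowerSeries.coeff r f) : ℚ) : ℝ) < 1 + lam := by
    have h2 := lt_of_lt_of_le hxθ (min_le_right _ _)
    rw [lt_div_iff₀ hppos] at h2
    linarith
  have hvAR : ((v A : ℚ) : ℝ) < 1 + lam := by
    rw [hvA]
    push_cast
    linarith
  -- the final valuation computation
  have hkey : PowerSeries.coeff n (f ^ p) ≠ 0 ∧
      v (PowerSeries.coeff n (f ^ p)) = v A := by
    have htriv : S = 0 → PowerSeries.coeff n (f ^ p) ≠ 0 ∧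
        v (PowerSeries.coeff n (f ^ p)) = v A := by
      intro hS0
      rw [hmain, hS0, add_zero]
      exact ⟨hAne, rfl⟩
    rcases hVS with hS0 | hSv
    · exact htriv hS0
    · by_cases hS0 : S = 0
      · exact htriv hS0
      · have hlt : v A < v S := by
          have : ((v A : ℚ) : ℝ) < ((v S : ℚ) : ℝ) := lt_of_lt_of_le hvAR hSv
          exact_mod_cast this
        have hne : A + S ≠ 0 := by
          intro hcon
          have hAeq : A = -S := eq_neg_of_add_eq_zero_left hcon
          rw [hAeq, S13.v_neg v hmul S hS0] at hlt
          exact lt_irrefl _ hlt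
        have h1 : v A ≤ v (A + S) := by
          have := hadd A S hAne hS0 hne
          rwa [min_eq_left hlt.le] at this
        have h2 : v (A + S) ≤ v A := by
          have hAS : A + S + -S = A := by ring
          have hmin := hadd (A + S) (-S) hne (neg_ne_zero.mpr hS0) (by rw [hAS]; exact hAne)
          rw [hAS, S13.v_neg v hmul S hS0] at hmin
          rcases le_total (v (A + S)) (v S) with hle | hle
          · rwa [min_eq_left hle] at hmin
          · rw [min_eq_right hle] at hmin
            linarith
        rw [hmain]
        exact ⟨hne, le_antisymm h2 h1⟩
  -- contradiction with the finiteness bound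
  have hmem : n ∈ {j : ℕ | PowerSeries.coeff j (f ^ p) ≠ 0 ∧
      v (PowerSeries.coeff j (f ^ p)) < (p : ℚ) / ((p : ℚ) - 1)} := by
    refine ⟨hkey.1, ?_⟩
    rw [hkey.2, hvA]
    have hvrQ : v (PowerSeries.coeff r f) < 1 / ((p:ℚ) - 1) := by
      have : ((v (PowerSeries.coeff r f) : ℚ) : ℝ) < ((1 / ((p:ℚ) - 1) : ℚ) : ℝ) := by
        rw [hcast1]; exact hvr1
      exact_mod_cast this
    have hpQ : (0:ℚ) < (p:ℚ) := by exact_mod_cast hp.pos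
    calc (p:ℚ) * v (PowerSeries.coeff r f) < (p:ℚ) * (1 / ((p:ℚ) - 1)) :=
        mul_lt_mul_of_pos_left hvrQ hpQ
      _ = (p:ℚ) / ((p:ℚ) - 1) := by rw [mul_one_div]
  have hle := hN hmem
  have : N + 1 ≤ n := le_trans (le_trans (le_max_left _ _) hrM) hrn
  omega
end

section
/- Over a field K of characteristic prime to p containing a primitive p^s-th root of unity, the map (a_1,…,a_s) ↦ class of a_1 a_2^p ⋯ a_s^{p^{s−1}} induces a group isomorphism (K^×)^{⊕s}/φ_s((K^×)^{⊕s}) ≅ K^×/(K^×)^{p^s}, where φ_s(a_1,…,a_s) = (a_1^p, a_2^p a_1^{−1}, …, a_s^p a_{s−1}^{−1}). -/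
/-- The map `φ_s (a_1, …, a_s) = (a_1^p, a_2^p a_1⁻¹, …, a_s^p a_{s-1}⁻¹)` on `(K^×)^s`
(as a subgroup given by the closure of its image, which is already a subgroup since `K^×`
is commutative). -/
def phiImage (p s : ℕ) (K : Type) [Field K] : Subgroup (Fin s → Kˣ) :=
  Subgroup.closure (Set.range fun a : Fin s → Kˣ =>
    fun i : Fin s => if (i : ℕ) = 0 then a i ^ p else a i ^ p * (a ⟨(i : ℕ) - 1, lt_of_le_of_lt (Nat.sub_le _ _) i.isLt⟩)⁻¹)

/-- The map `φ_s` as a monoid hom. -/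
def phiHom (p s : ℕ) (K : Type) [Field K] : (Fin s → Kˣ) →* (Fin s → Kˣ) :=
  MonoidHom.mk' (fun a : Fin s → Kˣ =>
    fun i : Fin s => if (i : ℕ) = 0 then a i ^ p else a i ^ p * (a ⟨(i : ℕ) - 1, lt_of_le_of_lt (Nat.sub_le _ _) i.isLt⟩)⁻¹)
    (by
      intro a b
      funext i
      by_cases h : (i : ℕ) = 0
      · simp [h, mul_pow]
      · simp only [h, if_false, Pi.mul_apply, mul_pow, mul_inv]
        exact mul_mul_mul_comm _ _ _ _)

lemma phiHom_apply (p s : ℕ) (K : Type) [Field K] (a : Fin s → Kˣ) (i : Fin s) :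
    phiHom p s K a i = if (i : ℕ) = 0 then a i ^ p
      else a i ^ p * (a ⟨(i : ℕ) - 1, lt_of_le_of_lt (Nat.sub_le _ _) i.isLt⟩)⁻¹ := rfl

/-- The map `f a = ∏ aᵢ ^ p^i` as a monoid hom. -/
def fHom (p s : ℕ) (K : Type) [Field K] : (Fin s → Kˣ) →* Kˣ :=
  MonoidHom.mk' (fun a : Fin s → Kˣ => ∏ i : Fin s, a i ^ p ^ (i : ℕ))
    (by intro a b; simp [mul_pow, Finset.prod_mul_distrib])

lemma fHom_apply (p s : ℕ) (K : Type) [Field K] (a : Fin s → Kˣ) :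
    fHom p s K a = ∏ i : Fin s, a i ^ p ^ (i : ℕ) := rfl

lemma f_phi (p s : ℕ) (hs : 1 ≤ s) (K : Type) [Field K] (c : Fin s → Kˣ) :
    fHom p s K (phiHom p s K c) = (c ⟨s - 1, by omega⟩) ^ p ^ s := by
  have h : ℕ → Kˣ := fun n => if hn : 1 ≤ n ∧ n ≤ s then c ⟨n - 1, by omega⟩ ^ p ^ n else 1
  set h : ℕ → Kˣ := fun n => if hn : 1 ≤ n ∧ n ≤ s then c ⟨n - 1, by omega⟩ ^ p ^ n else 1 with hh
  have hval : ∀ n (h1 : 1 ≤ n) (h2 : n ≤ s), h n = c ⟨n - 1, by omega⟩ ^ p ^ n := by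
    intro n h1 h2; rw [hh]; beta_reduce; rw [dif_pos ⟨h1, h2⟩]
  have hzero : h 0 = 1 := by rw [hh]; beta_reduce; rw [dif_neg (by omega)]
  have key : ∀ i : Fin s, (phiHom p s K c i) ^ p ^ (i : ℕ) = h ((i : ℕ) + 1) / h (i : ℕ) := by
    intro i
    obtain ⟨n, hn⟩ := i
    rw [phiHom_apply]
    by_cases h0 : n = 0
    · subst h0
      rw [if_pos rfl, hval 1 (le_refl 1) (by omega), hzero]
      simp
    · rw [if_neg h0, hval (n + 1) (by omega) (by omega), hval n (by omega) (by omega)]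
      have e1 : (⟨n + 1 - 1, by omega⟩ : Fin s) = ⟨n, hn⟩ := by
        apply Fin.ext; simp
      rw [e1, mul_pow, ← pow_mul, ← pow_succ', inv_pow, ← div_eq_mul_inv]
  calc fHom p s K (phiHom p s K c)
      = ∏ i : Fin s, (phiHom p s K c i) ^ p ^ (i : ℕ) := rfl
    _ = ∏ i : Fin s, (h ((i : ℕ) + 1) / h (i : ℕ)) := Finset.prod_congr rfl (fun i _ => key i)
    _ = ∏ n ∈ Finset.range s, (h (n + 1) / h n) := by
        rw [Fin.prod_univ_eq_prod_range (fun n => h (n + 1) / h n) s]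
    _ = h s / h 0 := Finset.prod_range_div h s
    _ = (c ⟨s - 1, by omega⟩) ^ p ^ s := by
        rw [hval s hs (le_refl s), hzero, div_one]

/-- Backwards solving: if `f a` is a `p^s`-th power, then `a` is in the range of `φ`. -/
lemma mem_range_phi (p s : ℕ) (K : Type) [Field K] (a : Fin s → Kˣ) (b : Kˣ)
    (hb : (∏ i : Fin s, a i ^ p ^ (i : ℕ)) = b ^ p ^ s) :
    ∃ c : Fin s → Kˣ, phiHom p s K c = a := by
  classical
  set D : ℕ → Kˣ := fun m =>
    b ^ p ^ (s - m) * ∏ j : Fin s, (if m ≤ (j : ℕ) then (a j)⁻¹ ^ p ^ ((j : ℕ) - m) else 1)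
    with hD
  have hD0 : D 0 = 1 := by
    rw [hD]
    beta_reduce
    simp only [Nat.sub_zero, Nat.zero_le, if_true, inv_pow]
    rw [Finset.prod_inv_distrib, ← hb]
    exact mul_inv_cancel _
  have claim : ∀ m : ℕ, ∀ (hm1 : 1 ≤ m) (hms : m ≤ s),
      D m ^ p = D (m - 1) * a ⟨m - 1, by omega⟩ := by
    intro m hm1 hms
    rw [hD]
    beta_reduce
    rw [mul_pow, ← pow_mul, ← Finset.prod_pow]
    have eb : p ^ (s - m) * p = p ^ (s - (m - 1)) := by
      rw [← pow_succ]; congr 1; omega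
    rw [eb]
    have ep : ∀ j : Fin s,
        (if m ≤ (j : ℕ) then (a j)⁻¹ ^ p ^ ((j : ℕ) - m) else 1) ^ p
          = (if m ≤ (j : ℕ) then (a j)⁻¹ ^ p ^ ((j : ℕ) - m + 1) else 1) := by
      intro j
      split
      · rw [← pow_mul, ← pow_succ]
      · exact one_pow p
    rw [Finset.prod_congr rfl (fun j _ => ep j), mul_assoc]
    congr 1
    have hu : ∀ j : Fin s, (if m - 1 ≤ (j : ℕ) then (a j)⁻¹ ^ p ^ ((j : ℕ) - (m - 1)) else 1)
        = (if m ≤ (j : ℕ) then (a j)⁻¹ ^ p ^ ((j : ℕ) - m + 1) else 1)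
          * (if (j : ℕ) = m - 1 then (a j)⁻¹ else 1) := by
      intro j
      by_cases h1 : m ≤ (j : ℕ)
      · rw [if_pos (by omega), if_pos h1, if_neg (by omega), mul_one]
        congr 2
        omega
      · by_cases h2 : (j : ℕ) = m - 1
        · rw [if_pos (by omega), if_neg h1, if_pos h2, one_mul]
          have e0 : (j : ℕ) - (m - 1) = 0 := by omega
          rw [e0, pow_zero, pow_one]
        · rw [if_neg (by omega), if_neg h1, if_neg h2, one_mul]
    have hcorr : (∏ j : Fin s, (if (j : ℕ) = m - 1 then (a j)⁻¹ else 1))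
        = (a ⟨m - 1, by omega⟩)⁻¹ := by
      rw [Finset.prod_eq_single (⟨m - 1, by omega⟩ : Fin s)]
      · rw [if_pos rfl]
      · intro j _ hj
        exact if_neg (fun h => hj (Fin.ext h))
      · intro h
        exact absurd (Finset.mem_univ _) h
    rw [Finset.prod_congr rfl (fun j _ => hu j), Finset.prod_mul_distrib, hcorr,
      inv_mul_cancel_right]
  refine ⟨fun i => D ((i : ℕ) + 1), ?_⟩
  funext i
  rw [phiHom_apply]
  obtain ⟨n, hn⟩ := i
  by_cases h0 : n = 0
  · subst h0
    rw [if_pos rfl]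
    show D (0 + 1) ^ p = _
    rw [claim 1 (le_refl 1) (by omega), hD0, one_mul]
  · rw [if_neg h0]
    show D (n + 1) ^ p * (D (n - 1 + 1))⁻¹ = _
    have e1 : n - 1 + 1 = n := by omega
    rw [e1, claim (n + 1) (by omega) (by omega)]
    simp only [Nat.add_sub_cancel]
    rw [mul_right_comm, mul_inv_cancel, one_mul]

lemma phiImage_eq (p s : ℕ) (K : Type) [Field K] :
    phiImage p s K = (phiHom p s K).range := by
  rw [phiImage]
  have h : (Set.range fun a : Fin s → Kˣ =>
      fun i : Fin s => if (i : ℕ) = 0 then a i ^ p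
        else a i ^ p * (a ⟨(i : ℕ) - 1, lt_of_le_of_lt (Nat.sub_le _ _) i.isLt⟩)⁻¹)
      = ((phiHom p s K).range : Set (Fin s → Kˣ)) := rfl
  rw [h, Subgroup.closure_eq]

/-- Kummer theory isomorphism: over a field `K` of characteristic prime to `p` containing
a primitive `p^s`-th root of unity, the map `(a_1, …, a_s) ↦ a_1 a_2^p ⋯ a_s^{p^{s-1}}`
induces a group isomorphism `(K^×)^{⊕s}/φ_s((K^×)^{⊕s}) ≅ K^×/(K^×)^{p^s}`, where
`φ_s(a_1, …, a_s) = (a_1^p, a_2^p a_1^{-1}, …, a_s^p a_{s-1}^{-1})`. -/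
theorem stmt_15 (p s : ℕ) (hp : p.Prime) (hs : 1 ≤ s) (K : Type) [Field K]
    (hchar : (p : K) ≠ 0) (ζ : K) (hζ : IsPrimitiveRoot ζ (p ^ s)) :
    ∃ e : ((Fin s → Kˣ) ⧸ phiImage p s K) ≃*
        (Kˣ ⧸ (MonoidHom.range (powMonoidHom (p ^ s) : Kˣ →* Kˣ))),
      ∀ a : Fin s → Kˣ,
        e (QuotientGroup.mk a) = QuotientGroup.mk (∏ i : Fin s, a i ^ p ^ (i : ℕ)) := by
  classical
  set R : Subgroup Kˣ := MonoidHom.range (powMonoidHom (p ^ s) : Kˣ →* Kˣ) with hR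
  set g : (Fin s → Kˣ) →* (Kˣ ⧸ R) := (QuotientGroup.mk' R).comp (fHom p s K) with hg
  have hmem : ∀ x : Kˣ, x ∈ R ↔ ∃ b : Kˣ, b ^ p ^ s = x := by
    intro x
    rw [hR]
    exact MonoidHom.mem_range
  have hker : ∀ x : Fin s → Kˣ, x ∈ phiImage p s K ↔ g x = 1 := by
    intro x
    rw [phiImage_eq, hg, MonoidHom.comp_apply, QuotientGroup.mk'_apply,
      QuotientGroup.eq_one_iff, hmem]
    constructor
    · rintro ⟨c, rfl⟩
      exact ⟨c ⟨s - 1, by omega⟩, (f_phi p s hs K c).symm⟩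
    · rintro ⟨b, hb⟩
      obtain ⟨c, hc⟩ := mem_range_phi p s K x b hb.symm
      exact ⟨c, hc⟩
  have hle : ∀ x ∈ phiImage p s K, g x = 1 := fun x hx => (hker x).mp hx
  set e0 : ((Fin s → Kˣ) ⧸ phiImage p s K) →* (Kˣ ⧸ R) :=
    QuotientGroup.lift (phiImage p s K) g (fun x hx => MonoidHom.mem_ker.mpr (hle x hx)) with he0
  have hinj : Function.Injective e0 := by
    intro x y h
    induction x using QuotientGroup.induction_on with
    | H x =>
    induction y using QuotientGroup.induction_on with
    | H y =>
    rw [he0] at h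
    simp only [QuotientGroup.lift_mk] at h
    rw [QuotientGroup.eq]
    apply (hker _).mpr
    rw [map_mul, map_inv, h, inv_mul_cancel]
  have hsurj : Function.Surjective e0 := by
    intro q
    induction q using QuotientGroup.induction_on with
    | H b =>
    refine ⟨QuotientGroup.mk (fun j : Fin s => if j = (⟨0, hs⟩ : Fin s) then b else 1), ?_⟩
    rw [he0]
    simp only [QuotientGroup.lift_mk]
    rw [hg, MonoidHom.comp_apply, QuotientGroup.mk'_apply, fHom_apply]
    congr 1
    calc (∏ i : Fin s, (if i = (⟨0, hs⟩ : Fin s) then b else 1) ^ p ^ (i : ℕ))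
        = ∏ i : Fin s, (if i = (⟨0, hs⟩ : Fin s) then b ^ p ^ (i : ℕ) else 1) := by
          refine Finset.prod_congr rfl (fun i _ => ?_)
          split <;> simp
      _ = b ^ p ^ ((⟨0, hs⟩ : Fin s) : ℕ) := by
          rw [Finset.prod_ite_eq' Finset.univ (⟨0, hs⟩ : Fin s) (fun i => b ^ p ^ (i : ℕ))]
          rw [if_pos (Finset.mem_univ _)]
      _ = b := by simp
  refine ⟨MulEquiv.ofBijective e0 ⟨hinj, hsurj⟩, fun a => ?_⟩
  rfl
end

section
/- Let p be prime, ζ_p a primitive p-th root of unity, λ = ζ_p − 1, and R = ℤ_(p)[ζ_p]. The substitution Z_0 = 1 + λY_0 transforms the Kummer equation Z_0^p = 1 + pλX_0 into S_0(Y_0) = X_0 where S_0(Y_0) = Y_0 + (λ^{p−1}/p)Y_0^p + (1/p)Σ_{i=2}^{p−1} C(p,i) λ^{i−1} Y_0^i has coefficients in R, and S_0 reduces modulo λ to y_0 − y_0^p. -/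
/-- The Artin–Schreier-type polynomial
`S₀(Y) = Y + (λ^{p-1}/p) Y^p + (1/p) Σ_{i=2}^{p-1} C(p,i) λ^{i-1} Y^i`, `λ = ζ_p - 1`. -/
noncomputable def S0 (p : ℕ) {K : Type} [Field K] (ζ : K) : Polynomial K :=
  Polynomial.X + Polynomial.C ((ζ - 1) ^ (p - 1) / (p : K)) * Polynomial.X ^ p +
    ∑ i ∈ Finset.Icc 2 (p - 1),
      Polynomial.C ((p.choose i : K) * (ζ - 1) ^ (i - 1) / (p : K)) * Polynomial.X ^ i

/-- The subring `ℤ_(p)[ζ]` of `K`: generated by `ζ` and the inverses of the natural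
numbers prime to `p`. -/
def Rloc (p : ℕ) {K : Type} [Field K] (ζ : K) : Subring K :=
  Subring.closure ({ζ} ∪ {x : K | ∃ m : ℕ, ¬ p ∣ m ∧ x * (m : K) = 1})

open Polynomial Finset

section Aux

variable {K : Type} [Field K] [CharZero K]

lemma zeta_mem_Rloc (p : ℕ) (ζ : K) : ζ ∈ Rloc p ζ :=
  Subring.subset_closure (Or.inl rfl)

lemma inv_mem_Rloc (p : ℕ) (ζ : K) {m : ℕ} (hm : ¬ p ∣ m) : ((m : K))⁻¹ ∈ Rloc p ζ := by
  have hm0 : (m : K) ≠ 0 := by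
    have : m ≠ 0 := by rintro rfl; exact hm (dvd_zero p)
    exact_mod_cast Nat.cast_ne_zero.mpr this
  exact Subring.subset_closure (Or.inr ⟨m, hm, inv_mul_cancel₀ hm0⟩)

/-- The key arithmetic fact: `λ^{p-1}/p ∈ R` and `λ^{p-1}/p ≡ -1 mod λR`. -/
lemma key_fact (p : ℕ) (hp : p.Prime) (ζ : K) (hζ : IsPrimitiveRoot ζ p) :
    (ζ - 1) ^ (p - 1) / (p : K) ∈ Rloc p ζ ∧
    ∃ t ∈ Rloc p ζ, (ζ - 1) ^ (p - 1) / (p : K) + 1 = (ζ - 1) * t := by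
  set R := Rloc p ζ with hR
  have hp2 : 2 ≤ p := hp.two_le
  have hpK : (p : K) ≠ 0 := Nat.cast_ne_zero.mpr hp.ne_zero
  have hζ1 : ζ ≠ 1 := hζ.ne_one hp.one_lt
  have hL : ζ - 1 ≠ 0 := sub_ne_zero.mpr hζ1
  have hζR : ζ ∈ R := zeta_mem_Rloc p ζ
  have hpow : ∀ j : ℕ, ζ ^ j ∈ R := fun j => pow_mem hζR j
  set u : ℕ → K := fun k => ∑ j ∈ range k, ζ ^ j with hu
  have huR : ∀ k, u k ∈ R := fun k => sum_mem (fun j _ => hpow j)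
  have hgeom : ∀ k, u k * (ζ - 1) = ζ ^ k - 1 := fun k => geom_sum_mul ζ k
  -- inverses of the u k
  have huinv : ∀ k, 0 < k → k < p → (u k)⁻¹ ∈ R ∧ u k ≠ 0 := by
    intro k hk0 hkp
    have hndvd : ¬ p ∣ k := Nat.not_dvd_of_pos_of_lt hk0 hkp
    have hcop : Nat.Coprime k p := (Nat.coprime_comm.mp (hp.coprime_iff_not_dvd.mpr hndvd))
    obtain ⟨k', -, hk'⟩ := Nat.exists_mul_mod_eq_one_of_coprime hcop hp.one_lt
    have hzkk : ζ ^ (k * k') = ζ := by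
      conv_lhs => rw [← Nat.div_add_mod (k * k') p]
      rw [pow_add, pow_mul, hζ.pow_eq_one, one_pow, one_mul, hk', pow_one]
    have h3 : ζ ^ k ≠ 1 := hζ.pow_ne_one_of_pos_of_lt hk0.ne' hkp
    have hne : ζ ^ k - 1 ≠ 0 := sub_ne_zero.mpr h3
    set w : K := ∑ j ∈ range k', (ζ ^ k) ^ j with hw
    have h1 : w * (ζ ^ k - 1) = ζ - 1 := by
      rw [hw, geom_sum_mul, ← pow_mul, hzkk]
    have hkey : u k * w = 1 := by
      have h4 : u k * w * ((ζ - 1) * (ζ ^ k - 1)) = 1 * ((ζ - 1) * (ζ ^ k - 1)) := by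
        have := hgeom k
        rw [one_mul]
        calc u k * w * ((ζ - 1) * (ζ ^ k - 1))
            = (u k * (ζ - 1)) * (w * (ζ ^ k - 1)) := by ring
          _ = (ζ ^ k - 1) * (ζ - 1) := by rw [this, h1]
          _ = (ζ - 1) * (ζ ^ k - 1) := by ring
      exact mul_right_cancel₀ (mul_ne_zero hL hne) h4
    have hwR : w ∈ R := sum_mem (fun j _ => pow_mem (hpow k) j)
    refine ⟨?_, left_ne_zero_of_mul_eq_one hkey⟩
    rw [inv_eq_of_mul_eq_one_right hkey]
    exact hwR
  -- the product formula
  set V : K := ∏ k ∈ range (p - 1), u (k + 1) with hV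
  have hVR : V ∈ R := prod_mem (fun k _ => huR _)
  set v : K := (-1 : K) ^ (p - 1) * V with hv
  have hvR : v ∈ R := mul_mem (pow_mem (neg_mem (one_mem R)) _) hVR
  have hζ' : IsPrimitiveRoot ζ ((p - 1) + 1) := by
    rwa [Nat.sub_add_cancel hp.one_le]
  have hprod : ∏ k ∈ range (p - 1), (1 - ζ ^ (k + 1)) = (p : K) := by
    have h := hζ'.prod_one_sub_pow_eq_order
    rw [h, Nat.cast_sub hp.one_le, Nat.cast_one]
    ring
  have hEq : (ζ - 1) ^ (p - 1) * v = (p : K) := by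
    rw [← hprod, hv, hV]
    rw [Finset.prod_congr rfl (fun k _ => show (1 : K) - ζ ^ (k + 1) = (-1) * (ζ - 1) * u (k + 1) by
      linear_combination hgeom (k + 1))]
    simp only [Finset.prod_mul_distrib, Finset.prod_const, Finset.card_range]
    ring
  have hvne : v ≠ 0 := by
    intro h
    rw [h, mul_zero] at hEq
    exact hpK hEq.symm
  have hkey1 : (ζ - 1) ^ (p - 1) / (p : K) = v⁻¹ := by
    field_simp
    linear_combination hEq
  have hvinvR : v⁻¹ ∈ R := by
    rw [hv, mul_inv, ← inv_pow, inv_neg, inv_one, ← Finset.prod_inv_distrib]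
    refine mul_mem (pow_mem (neg_mem (one_mem R)) _) (prod_mem fun k hk => ?_)
    exact (huinv (k + 1) k.succ_pos (by have := Finset.mem_range.mp hk; omega)).1
  -- congruences mod λ
  have hucong : ∀ k : ℕ, ∃ s ∈ R, u k - (k : K) = (ζ - 1) * s := by
    intro k
    refine ⟨∑ j ∈ range k, u j, sum_mem fun j _ => huR j, ?_⟩
    rw [Finset.mul_sum]
    have : ∀ j ∈ range k, (ζ - 1) * u j = ζ ^ j - 1 := fun j _ => by
      rw [mul_comm]; exact hgeom j
    rw [Finset.sum_congr rfl this, Finset.sum_sub_distrib, Finset.sum_const,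
      Finset.card_range, nsmul_eq_mul, mul_one]
  -- product difference lemma
  have hproddiff : ∀ (a b : ℕ → K) (s : Finset ℕ), (∀ k ∈ s, a k ∈ R) → (∀ k ∈ s, b k ∈ R) →
      (∀ k ∈ s, ∃ t ∈ R, a k - b k = (ζ - 1) * t) →
      ∃ t ∈ R, (∏ k ∈ s, a k) - (∏ k ∈ s, b k) = (ζ - 1) * t := by
    intro a b s
    induction s using Finset.induction_on with
    | empty => exact fun _ _ _ => ⟨0, zero_mem R, by simp⟩
    | @insert i s hi ih =>
      intro ha hb hab
      obtain ⟨t, htR, ht⟩ := ih (fun k hk => ha k (Finset.mem_insert_of_mem hk))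
        (fun k hk => hb k (Finset.mem_insert_of_mem hk))
        (fun k hk => hab k (Finset.mem_insert_of_mem hk))
      obtain ⟨t0, ht0R, ht0⟩ := hab i (Finset.mem_insert_self i s)
      have hbprod : (∏ k ∈ s, b k) ∈ R := prod_mem fun k hk => hb k (Finset.mem_insert_of_mem hk)
      refine ⟨a i * t + t0 * ∏ k ∈ s, b k,
        add_mem (mul_mem (ha i (Finset.mem_insert_self i s)) htR) (mul_mem ht0R hbprod), ?_⟩
      rw [Finset.prod_insert hi, Finset.prod_insert hi]
      linear_combination a i * ht + (∏ k ∈ s, b k) * ht0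
  -- V ≡ (p-1)! mod λR
  have hVcong : ∃ t ∈ R, V - ((p - 1).factorial : K) = (ζ - 1) * t := by
    have := hproddiff (fun k => u (k + 1)) (fun k => ((k + 1 : ℕ) : K)) (range (p - 1))
      (fun k _ => huR _) (fun k _ => natCast_mem R _)
      (fun k _ => by exact_mod_cast hucong (k + 1))
    rwa [← Nat.cast_prod, Finset.prod_range_add_one_eq_factorial] at this
  -- Wilson: p ∣ (p-1)! + 1
  have hwilson : ∃ m : ℕ, (p - 1).factorial + 1 = p * m := by
    have : (((p - 1).factorial + 1 : ℕ) : ZMod p) = 0 := by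
      haveI := Fact.mk hp
      push_cast
      rw [ZMod.wilsons_lemma]
      ring
    exact (ZMod.natCast_eq_zero_iff _ _).mp this
  clear_value u V v
  -- the main congruence
  have hmain : ∃ t ∈ R, (ζ - 1) ^ (p - 1) / (p : K) + 1 = (ζ - 1) * t := by
    rcases eq_or_ne p 2 with rfl | hpne2
    · have hζ2 : ζ = -1 := hζ.eq_neg_one_of_two_right
      exact ⟨0, zero_mem R, by rw [hζ2]; norm_num⟩
    · have hodd : Odd p := hp.odd_of_ne_two hpne2
      have heven : Even (p - 1) := by
        rcases hodd with ⟨m, hm⟩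
        exact ⟨m, by omega⟩
      have hsign : ((-1 : K)) ^ (p - 1) = 1 := heven.neg_one_pow
      have hvV : v = V := by rw [hv, hsign, one_mul]
      obtain ⟨t1, ht1R, ht1⟩ := hVcong
      obtain ⟨m, hm⟩ := hwilson
      -- v + 1 = (V - (p-1)!) + ((p-1)! + 1) = λ t1 + p m
      have hp_factor : (p : K) = (ζ - 1) * ((ζ - 1) ^ (p - 2) * v) := by
        rw [← hEq, show p - 1 = (p - 2) + 1 by omega, pow_succ]
        ring
      have hv1 : v + 1 = (ζ - 1) * (t1 + (ζ - 1) ^ (p - 2) * v * (m : K)) := by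
        have hmK : ((p - 1).factorial : K) + 1 = (p : K) * (m : K) := by
          have := congrArg (Nat.cast : ℕ → K) hm
          push_cast at this
          exact this
        calc v + 1 = (V - ((p - 1).factorial : K)) + (((p - 1).factorial : K) + 1) := by
              rw [hvV]; ring
          _ = (ζ - 1) * t1 + (p : K) * (m : K) := by rw [ht1, hmK]
          _ = (ζ - 1) * (t1 + (ζ - 1) ^ (p - 2) * v * (m : K)) := by
              rw [hp_factor, hvV]; ring
      refine ⟨v⁻¹ * (t1 + (ζ - 1) ^ (p - 2) * v * (m : K)),
        mul_mem hvinvR (add_mem ht1R (mul_mem (mul_mem (pow_mem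
          (sub_mem hζR (one_mem R)) _) hvR) (natCast_mem R m))), ?_⟩
      rw [hkey1]
      have : v⁻¹ + 1 = v⁻¹ * (v + 1) := by
        field_simp
        ring
      rw [this, hv1]
      ring
  exact ⟨hkey1 ▸ hvinvR, hmain⟩

end Aux

/-- The substitution `Z₀ = 1 + λ Y₀` transforms the Kummer equation `Z₀^p = 1 + pλX₀` into
`S₀(Y₀) = X₀`, i.e. `(1 + λY₀)^p = 1 + pλ·S₀(Y₀)`; moreover `S₀` has all of its
coefficients in `R = ℤ_(p)[ζ_p]`, and `S₀` reduces modulo `λ` to `y₀ - y₀^p`. -/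
theorem stmt_16 (p : ℕ) (hp : p.Prime) (K : Type) [Field K] [CharZero K]
    (ζ : K) (hζ : IsPrimitiveRoot ζ p) :
    (1 + Polynomial.C (ζ - 1) * Polynomial.X) ^ p =
        1 + Polynomial.C ((p : K) * (ζ - 1)) * S0 p ζ ∧
    (∀ n : ℕ, (S0 p ζ).coeff n ∈ Rloc p ζ) ∧
    (∀ n : ℕ, ∃ t ∈ Rloc p ζ,
      (S0 p ζ).coeff n - (Polynomial.X - Polynomial.X ^ p : Polynomial K).coeff n =
        (ζ - 1) * t) := by
  have hp2 : 2 ≤ p := hp.two_le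
  have hpK : (p : K) ≠ 0 := Nat.cast_ne_zero.mpr hp.ne_zero
  set R := Rloc p ζ with hR
  have hζR : ζ ∈ R := zeta_mem_Rloc p ζ
  have hLmem : ζ - 1 ∈ R := sub_mem hζR (one_mem R)
  obtain ⟨hmem, hcong⟩ := key_fact p hp ζ hζ
  -- coefficients of S0
  have hco : ∀ n : ℕ, (S0 p ζ).coeff n =
      (if 1 = n then 1 else 0) + ((ζ - 1) ^ (p - 1) / (p : K)) * (if n = p then 1 else 0) +
      (if n ∈ Finset.Icc 2 (p - 1) then (p.choose n : K) * (ζ - 1) ^ (n - 1) / (p : K)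
        else 0) := by
    intro n
    simp only [S0, coeff_add, coeff_X, coeff_C_mul, coeff_X_pow, finset_sum_coeff,
      mul_ite, mul_one, mul_zero, Finset.sum_ite_eq]
  have hcoXXp : ∀ n : ℕ, (Polynomial.X - Polynomial.X ^ p : Polynomial K).coeff n =
      (if 1 = n then 1 else 0) - (if n = p then 1 else 0) := by
    intro n
    rw [coeff_sub, coeff_X, coeff_X_pow]
  -- part 3
  have part3 : ∀ n : ℕ, ∃ t ∈ R,
      (S0 p ζ).coeff n - (Polynomial.X - Polynomial.X ^ p : Polynomial K).coeff n =
        (ζ - 1) * t := by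
    intro n
    rw [hco n, hcoXXp n]
    by_cases hnp : n = p
    · obtain ⟨t, htR, ht⟩ := hcong
      refine ⟨t, htR, ?_⟩
      have h1 : ¬ n ∈ Finset.Icc 2 (p - 1) := by
        simp only [Finset.mem_Icc]; omega
      have h2 : ¬ (1 = n) := by omega
      rw [if_pos hnp, if_neg h1, if_neg h2]
      linear_combination ht
    · by_cases hni : n ∈ Finset.Icc 2 (p - 1)
      · obtain ⟨hn2, hnp1⟩ := Finset.mem_Icc.mp hni
        have hdvd : p ∣ p.choose n := hp.dvd_choose_self (by omega) (by omega)
        obtain ⟨c, hc⟩ := hdvd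
        refine ⟨(c : K) * (ζ - 1) ^ (n - 2),
          mul_mem (natCast_mem R c) (pow_mem hLmem _), ?_⟩
        have h2 : ¬ (1 = n) := by omega
        rw [if_pos hni, if_neg h2, if_neg hnp]
        have hpow : (ζ - 1) ^ (n - 1) = (ζ - 1) * (ζ - 1) ^ (n - 2) := by
          conv_lhs => rw [show n - 1 = (n - 2) + 1 by omega]
          rw [pow_succ]; ring
        rw [hc, hpow]
        push_cast
        field_simp
        ring
      · refine ⟨0, zero_mem R, ?_⟩
        rw [if_neg hnp, if_neg hni]
        split_ifs <;> ring
  -- part 2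
  have part2 : ∀ n : ℕ, (S0 p ζ).coeff n ∈ R := by
    intro n
    obtain ⟨t, htR, ht⟩ := part3 n
    have heq : (S0 p ζ).coeff n =
        (Polynomial.X - Polynomial.X ^ p : Polynomial K).coeff n + (ζ - 1) * t := by
      linear_combination ht
    rw [heq, hcoXXp n]
    refine add_mem (sub_mem ?_ ?_) (mul_mem hLmem htR) <;>
      split_ifs <;> first | exact one_mem R | exact zero_mem R
  -- part 1
  have hdecomp : Finset.range (p + 1) =
      insert 0 (insert 1 (insert p (Finset.Icc 2 (p - 1)))) := by
    ext x
    simp only [Finset.mem_range, Finset.mem_insert, Finset.mem_Icc]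
    omega
  have h0 : (0 : ℕ) ∉ insert 1 (insert p (Finset.Icc 2 (p - 1))) := by
    simp only [Finset.mem_insert, Finset.mem_Icc]; omega
  have h1 : (1 : ℕ) ∉ insert p (Finset.Icc 2 (p - 1)) := by
    simp only [Finset.mem_insert, Finset.mem_Icc]; omega
  have hpn : p ∉ Finset.Icc 2 (p - 1) := by
    simp only [Finset.mem_Icc]; omega
  have hlhs : (1 + Polynomial.C (ζ - 1) * Polynomial.X) ^ p =
      ∑ i ∈ Finset.range (p + 1),
        Polynomial.C ((p.choose i : K) * (ζ - 1) ^ i) * Polynomial.X ^ i := by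
    rw [add_comm, add_pow]
    refine Finset.sum_congr rfl fun i _ => ?_
    rw [one_pow, mul_one, mul_pow, ← C_pow, ← Polynomial.C_eq_natCast, C_mul]
    ring
  have hrhs : (1 : Polynomial K) + Polynomial.C ((p : K) * (ζ - 1)) * S0 p ζ =
      ∑ i ∈ Finset.range (p + 1),
        Polynomial.C ((p.choose i : K) * (ζ - 1) ^ i) * Polynomial.X ^ i := by
    rw [hdecomp, Finset.sum_insert h0, Finset.sum_insert h1, Finset.sum_insert hpn]
    have e0 : Polynomial.C ((p.choose 0 : K) * (ζ - 1) ^ 0) * Polynomial.X ^ 0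
        = (1 : Polynomial K) := by simp
    have e1 : Polynomial.C ((p.choose 1 : K) * (ζ - 1) ^ 1) * Polynomial.X ^ 1
        = Polynomial.C ((p : K) * (ζ - 1)) * Polynomial.X := by
      rw [Nat.choose_one_right, pow_one, pow_one]
    have ep : Polynomial.C ((p.choose p : K) * (ζ - 1) ^ p) * Polynomial.X ^ p
        = Polynomial.C ((p : K) * (ζ - 1)) *
          (Polynomial.C ((ζ - 1) ^ (p - 1) / (p : K)) * Polynomial.X ^ p) := by
      have hpow : (ζ - 1) ^ p = (ζ - 1) * (ζ - 1) ^ (p - 1) := by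
        conv_lhs => rw [show p = (p - 1) + 1 by omega]
        rw [pow_succ]; ring
      have hcc : (p.choose p : K) * (ζ - 1) ^ p
          = (p : K) * (ζ - 1) * ((ζ - 1) ^ (p - 1) / (p : K)) := by
        rw [Nat.choose_self, Nat.cast_one, one_mul, hpow]
        field_simp
      rw [hcc, C_mul, mul_assoc]
    have ei : ∀ i ∈ Finset.Icc 2 (p - 1),
        Polynomial.C ((p.choose i : K) * (ζ - 1) ^ i) * Polynomial.X ^ i
        = Polynomial.C ((p : K) * (ζ - 1)) *
          (Polynomial.C ((p.choose i : K) * (ζ - 1) ^ (i - 1) / (p : K)) *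
            Polynomial.X ^ i) := by
      intro i hi
      obtain ⟨hi2, hip⟩ := Finset.mem_Icc.mp hi
      have hpow : (ζ - 1) ^ i = (ζ - 1) * (ζ - 1) ^ (i - 1) := by
        conv_lhs => rw [show i = (i - 1) + 1 by omega]
        rw [pow_succ]; ring
      have hcc : (p.choose i : K) * (ζ - 1) ^ i
          = (p : K) * (ζ - 1) * ((p.choose i : K) * (ζ - 1) ^ (i - 1) / (p : K)) := by
        rw [hpow]
        field_simp
      rw [hcc, C_mul, mul_assoc]
    rw [e0, e1, ep, Finset.sum_congr rfl ei, S0]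
    rw [mul_add, mul_add, Finset.mul_sum]
    ring
  exact ⟨hlhs.trans hrhs.symm, part2, part3⟩
end
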